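/- arXiv:2508.07694 — 3 statements merged into one kernel-verified Lean document; each statement's English description precedes it below -/
import Mathlib

section
/- Let 0 < a < b and let p ∈ [1, ∞) be a real number. There exists a constant C > 0, depending only on a, b and p, such that for every vector field u : ℝ² → ℝ² that is continuously differentiable on a neighborhood of the closed annulus {x : a ≤ |x| ≤ b} and satisfies u(x)·x = 0 whenever |x| ∈ {a, b}, one has C ∫_Ω |u(x)|^p dx ≤ ∫_Ω ‖Du(x)‖^p dx + ∮_{∂B(0,b)} |u|^p ds, where ‖Du(x)‖ denotes the Frobenius norm of the Jacobian matrix of u at x. -/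
open Real MeasureTheory

noncomputable section

/-- Partial derivative `∂₁ f` of a scalar function on `ℝ²`. -/
def pd1 (f : ℝ × ℝ → ℝ) : ℝ × ℝ → ℝ := fun x => fderiv ℝ f x (1, 0)

/-- Partial derivative `∂₂ f` of a scalar function on `ℝ²`. -/
def pd2 (f : ℝ × ℝ → ℝ) : ℝ × ℝ → ℝ := fun x => fderiv ℝ f x (0, 1)

/-- First component of a vector field on `ℝ²`. -/
def cmp1 (v : ℝ × ℝ → ℝ × ℝ) : ℝ × ℝ → ℝ := fun x => (v x).1

/-- Second component of a vector field on `ℝ²`. -/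
def cmp2 (v : ℝ × ℝ → ℝ × ℝ) : ℝ × ℝ → ℝ := fun x => (v x).2

/-- The open annulus `Ω = {x ∈ ℝ² : a < |x| < b}`. -/
def ann (a b : ℝ) : Set (ℝ × ℝ) := {x | a ^ 2 < x.1 ^ 2 + x.2 ^ 2 ∧ x.1 ^ 2 + x.2 ^ 2 < b ^ 2}

/-- The closed annulus `{x ∈ ℝ² : a ≤ |x| ≤ b}`. -/
def cann (a b : ℝ) : Set (ℝ × ℝ) := {x | a ^ 2 ≤ x.1 ^ 2 + x.2 ^ 2 ∧ x.1 ^ 2 + x.2 ^ 2 ≤ b ^ 2}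

/-- The circle `∂B(0, r) = {x ∈ ℝ² : |x| = r}`. -/
def circ (r : ℝ) : Set (ℝ × ℝ) := {x | x.1 ^ 2 + x.2 ^ 2 = r ^ 2}

/-- Boundary integral `∮_{∂B(0,r)} f ds = ∫₀^{2π} f(r cos θ, r sin θ) r dθ`. -/
def bInt (r : ℝ) (f : ℝ × ℝ → ℝ) : ℝ :=
  ∫ θ in (0 : ℝ)..(2 * π), f (r * Real.cos θ, r * Real.sin θ) * r

/-- Tangential component `v_τ(x) = v(x)·(x₂, −x₁)/r` on the circle of radius `r`. -/
def tang (r : ℝ) (v : ℝ × ℝ → ℝ × ℝ) : ℝ × ℝ → ℝ :=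
  fun x => ((v x).1 * x.2 - (v x).2 * x.1) / r

/-- The Navier-slip condition on the inner circle `|x| = a`:
`μ Σ_{i,j} τ_i(x) n_j(x) (∂_i v_j(x) + ∂_j v_i(x)) = α v(x)·τ(x)` for all `|x| = a`,
where `n(x) = −x/a` and `τ(x) = (x₂, −x₁)/a`. -/
def navierSlip (μ α a : ℝ) (v : ℝ × ℝ → ℝ × ℝ) : Prop :=
  ∀ x : ℝ × ℝ, x.1 ^ 2 + x.2 ^ 2 = a ^ 2 →
    μ * ((x.2 / a) * (-(x.1 / a)) * (pd1 (cmp1 v) x + pd1 (cmp1 v) x)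
       + (x.2 / a) * (-(x.2 / a)) * (pd1 (cmp2 v) x + pd2 (cmp1 v) x)
       + (-(x.1 / a)) * (-(x.1 / a)) * (pd2 (cmp1 v) x + pd1 (cmp2 v) x)
       + (-(x.1 / a)) * (-(x.2 / a)) * (pd2 (cmp2 v) x + pd2 (cmp2 v) x))
    = α * ((v x).1 * (x.2 / a) + (v x).2 * (-(x.1 / a)))

/-! ### Auxiliary lemmas -/

section Aux

open Set

lemma PA.sqrt_le_abs_add_abs (x y : ℝ) : Real.sqrt (x ^ 2 + y ^ 2) ≤ |x| + |y| := by
  have h : Real.sqrt (x ^ 2 + y ^ 2) ≤ Real.sqrt ((|x| + |y|) ^ 2) := by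
    apply Real.sqrt_le_sqrt
    nlinarith [abs_nonneg x, abs_nonneg y, sq_abs x, sq_abs y]
  rwa [Real.sqrt_sq (by positivity)] at h

lemma PA.abs_le_sqrt_left (x y : ℝ) : |x| ≤ Real.sqrt (x ^ 2 + y ^ 2) := by
  rw [← Real.sqrt_sq_eq_abs]
  exact Real.sqrt_le_sqrt (by nlinarith [sq_nonneg y])

lemma PA.abs_le_sqrt_right (x y : ℝ) : |y| ≤ Real.sqrt (x ^ 2 + y ^ 2) := by
  rw [← Real.sqrt_sq_eq_abs]
  exact Real.sqrt_le_sqrt (by nlinarith [sq_nonneg x])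

lemma PA.rpow_add_le {p x y : ℝ} (hp : 1 ≤ p) (hx : 0 ≤ x) (hy : 0 ≤ y) :
    (x + y) ^ p ≤ 2 ^ p * (x ^ p + y ^ p) := by
  have hp0 : (0:ℝ) ≤ p := by linarith
  have h1 : x + y ≤ 2 * max x y := by
    rcases le_total x y with h | h
    · simp [max_eq_right h]; linarith
    · simp [max_eq_left h]; linarith
  have h2 : (x + y) ^ p ≤ (2 * max x y) ^ p :=
    Real.rpow_le_rpow (by linarith) h1 hp0
  have hm : (0:ℝ) ≤ max x y := le_max_of_le_left hx
  have h3 : (2 * max x y) ^ p = 2 ^ p * (max x y) ^ p :=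
    Real.mul_rpow (by norm_num) hm
  have h4 : (max x y) ^ p ≤ x ^ p + y ^ p := by
    rcases le_total x y with h | h
    · rw [max_eq_right h]
      have := Real.rpow_nonneg hx p
      linarith
    · rw [max_eq_left h]
      have := Real.rpow_nonneg hy p
      linarith
  calc (x + y) ^ p ≤ 2 ^ p * (max x y) ^ p := by rw [← h3]; exact h2
    _ ≤ 2 ^ p * (x ^ p + y ^ p) := by
        have : (0:ℝ) ≤ 2 ^ p := Real.rpow_nonneg (by norm_num) p
        nlinarith

lemma PA.jensen_rpow {F : ℝ → ℝ} {a b p : ℝ} (hab : a < b) (hp : 1 ≤ p)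
    (hF : ContinuousOn F (Icc a b)) (hF0 : ∀ s ∈ Icc a b, 0 ≤ F s) :
    (∫ s in a..b, F s) ^ p ≤ (b - a) ^ (p - 1) * ∫ s in a..b, F s ^ p := by
  have hm : (0:ℝ) < b - a := by linarith
  have hμ0 : (volume (Ioc a b)) ≠ 0 := by
    simp [Real.volume_Ioc, ENNReal.ofReal_eq_zero]; linarith
  have hμt : (volume (Ioc a b)) ≠ ⊤ := by simp [Real.volume_Ioc]
  have hFi : IntegrableOn F (Ioc a b) :=
    (hF.integrableOn_compact isCompact_Icc).mono_set Ioc_subset_Icc_self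
  have hFp : ContinuousOn (fun s => F s ^ p) (Icc a b) := by
    apply ContinuousOn.rpow_const hF
    intro x hx; right; linarith
  have hFpi : IntegrableOn (fun s => F s ^ p) (Ioc a b) :=
    (hFp.integrableOn_compact isCompact_Icc).mono_set Ioc_subset_Icc_self
  have hconv : ConvexOn ℝ (Ici (0:ℝ)) fun x : ℝ => x ^ p := convexOn_rpow hp
  have hgc : ContinuousOn (fun x : ℝ => x ^ p) (Ici 0) := fun x _ =>
    (Real.continuousAt_rpow_const x p (Or.inr (by linarith))).continuousWithinAt
  have hfs : ∀ᵐ x ∂(volume.restrict (Ioc a b)), F x ∈ Ici (0:ℝ) := by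
    rw [ae_restrict_iff' measurableSet_Ioc]
    exact Filter.Eventually.of_forall fun x hx => hF0 x (Ioc_subset_Icc_self hx)
  have key := hconv.map_set_average_le hgc isClosed_Ici hμ0 hμt hfs hFi hFpi
  rw [setAverage_eq, setAverage_eq] at key
  rw [intervalIntegral.integral_of_le hab.le, intervalIntegral.integral_of_le hab.le]
  set I := ∫ x in Ioc a b, F x with hIdef
  set J := ∫ x in Ioc a b, F x ^ p with hJdef
  have hμ : (volume (Ioc a b)).toReal = b - a := by
    simp [Real.volume_Ioc, ENNReal.toReal_ofReal hm.le]
  rw [measureReal_def, hμ, smul_eq_mul, smul_eq_mul] at key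
  have hI0 : 0 ≤ I := setIntegral_nonneg measurableSet_Ioc
    (fun x hx => hF0 x (Ioc_subset_Icc_self hx))
  have h1 : ((b - a)⁻¹ * I) ^ p = ((b - a)⁻¹) ^ p * I ^ p :=
    Real.mul_rpow (inv_nonneg.2 hm.le) hI0
  have h2 : (b - a) ^ p * ((b - a)⁻¹) ^ p = 1 := by
    rw [← Real.mul_rpow hm.le (inv_nonneg.2 hm.le), mul_inv_cancel₀ hm.ne', Real.one_rpow]
  have h3 : I ^ p = (b - a) ^ p * (((b - a)⁻¹ * I) ^ p) := by
    rw [h1, ← mul_assoc, h2, one_mul]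
  have h4 : (b - a) ^ p * ((b - a)⁻¹ * J) = (b - a) ^ (p - 1) * J := by
    rw [← mul_assoc]
    congr 1
    rw [← Real.rpow_neg_one (b - a), ← Real.rpow_add hm]
    ring_nf
  have hbp : (0:ℝ) ≤ (b - a) ^ p := Real.rpow_nonneg hm.le p
  calc I ^ p = (b - a) ^ p * (((b - a)⁻¹ * I) ^ p) := h3
    _ ≤ (b - a) ^ p * ((b - a)⁻¹ * J) := by nlinarith [key]
    _ = (b - a) ^ (p - 1) * J := h4

lemma PA.swap_cont {f : ℝ → ℝ → ℝ} (hf : Continuous (Function.uncurry f)) {a b c d : ℝ}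
    (hab : a ≤ b) (hcd : c ≤ d) :
    ∫ x in a..b, (∫ y in c..d, f x y) = ∫ y in c..d, (∫ x in a..b, f x y) := by
  have hint : Integrable (Function.uncurry f)
      ((volume.restrict (Ioc a b)).prod (volume.restrict (Ioc c d))) := by
    rw [Measure.prod_restrict]
    exact ((hf.continuousOn.integrableOn_compact (isCompact_Icc.prod isCompact_Icc))).mono_set
      (prod_mono Ioc_subset_Icc_self Ioc_subset_Icc_self)
  have := MeasureTheory.integral_integral_swap hint
  simp only [intervalIntegral.integral_of_le hab, intervalIntegral.integral_of_le hcd]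
  exact this

lemma PA.mem_cann {a b : ℝ} (ha : 0 ≤ a) {s θ : ℝ} (h1 : a ≤ s) (h2 : s ≤ b) :
    (s * Real.cos θ, s * Real.sin θ) ∈ cann a b := by
  have hsq : (s * Real.cos θ) ^ 2 + (s * Real.sin θ) ^ 2 = s ^ 2 := by
    have := Real.sin_sq_add_cos_sq θ; nlinarith
  constructor <;> simp only <;> rw [hsq] <;> nlinarith

lemma PA.polar_ann {a b : ℝ} (ha : 0 < a) (hab : a < b) {g : ℝ × ℝ → ℝ}
    (hg : ContinuousOn g (cann a b)) :
    ∫ x in ann a b, g x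
      = ∫ r in a..b, (∫ θ in (-π)..π, r * g (r * Real.cos θ, r * Real.sin θ)) := by
  have hann_meas : MeasurableSet (ann a b) := by
    have : IsOpen (ann a b) := by
      apply IsOpen.inter
      · exact isOpen_lt continuous_const ((continuous_fst.pow 2).add (continuous_snd.pow 2))
      · exact isOpen_lt ((continuous_fst.pow 2).add (continuous_snd.pow 2)) continuous_const
    exact this.measurableSet
  rw [← MeasureTheory.integral_indicator hann_meas]
  rw [← integral_comp_polarCoord_symm (Set.indicator (ann a b) g)]
  set S : Set (ℝ × ℝ) := Ioo a b ×ˢ Ioo (-π) π with hS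
  have hSsub : S ⊆ polarCoord.target := by
    rw [polarCoord_target]
    exact prod_mono (fun r hr => lt_trans ha hr.1) subset_rfl
  have hcongr : ∀ q ∈ polarCoord.target,
      q.1 • (Set.indicator (ann a b) g) (polarCoord.symm q)
        = Set.indicator S (fun q : ℝ × ℝ => q.1 * g (polarCoord.symm q)) q := by
    rintro ⟨r, θ⟩ hq
    rw [polarCoord_target] at hq
    have hr : (0:ℝ) < r := hq.1
    have hptsq : (r * Real.cos θ) ^ 2 + (r * Real.sin θ) ^ 2 = r ^ 2 := by
      have := Real.sin_sq_add_cos_sq θ; nlinarith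
    have hmem : polarCoord.symm (r, θ) ∈ ann a b ↔ (r, θ) ∈ S := by
      rw [polarCoord_symm_apply]
      simp only [ann, mem_setOf_eq, hS, mem_prod, mem_Ioo]
      rw [hptsq]
      constructor
      · rintro ⟨h1, h2⟩
        exact ⟨⟨by nlinarith, by nlinarith⟩, hq.2⟩
      · rintro ⟨⟨h1, h2⟩, -⟩
        constructor <;> nlinarith
    by_cases hin : (r, θ) ∈ S
    · rw [Set.indicator_of_mem hin, Set.indicator_of_mem (hmem.2 hin)]
      simp
    · rw [Set.indicator_of_notMem hin, Set.indicator_of_notMem (fun h => hin (hmem.1 h))]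
      simp
  rw [MeasureTheory.setIntegral_congr_fun polarCoord.open_target.measurableSet hcongr]
  rw [MeasureTheory.setIntegral_indicator (measurableSet_Ioo.prod measurableSet_Ioo)]
  rw [Set.inter_eq_self_of_subset_right hSsub]
  have hmaps : MapsTo (fun q : ℝ × ℝ => polarCoord.symm q) (Icc a b ×ˢ Icc (-π) π)
      (cann a b) := by
    rintro ⟨r, θ⟩ ⟨h1, h2⟩
    show polarCoord.symm (r, θ) ∈ cann a b
    rw [polarCoord_symm_apply]
    exact PA.mem_cann ha.le h1.1 h1.2
  have hGcont : ContinuousOn (fun q : ℝ × ℝ => q.1 * g (polarCoord.symm q))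
      (Icc a b ×ˢ Icc (-π) π) := by
    apply ContinuousOn.mul continuous_fst.continuousOn
    have hsymm : Continuous (fun q : ℝ × ℝ => polarCoord.symm q) := by
      rw [funext polarCoord_symm_apply]
      fun_prop
    exact hg.comp hsymm.continuousOn hmaps
  have hGint : IntegrableOn (fun q : ℝ × ℝ => q.1 * g (polarCoord.symm q)) S := by
    apply (hGcont.integrableOn_compact (isCompact_Icc.prod isCompact_Icc)).mono_set
    exact prod_mono Ioo_subset_Icc_self Ioo_subset_Icc_self
  rw [MeasureTheory.Measure.volume_eq_prod ℝ ℝ] at hGint ⊢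
  rw [MeasureTheory.setIntegral_prod _ hGint]
  rw [intervalIntegral.integral_of_le hab.le, MeasureTheory.integral_Ioc_eq_integral_Ioo]
  apply setIntegral_congr_fun measurableSet_Ioo
  intro r _
  dsimp only
  rw [intervalIntegral.integral_of_le (by linarith [Real.pi_pos] : -π ≤ π),
    MeasureTheory.integral_Ioc_eq_integral_Ioo]
  apply setIntegral_congr_fun measurableSet_Ioo
  intro θ _
  dsimp only
  rw [polarCoord_symm_apply]

lemma PA.comp_bound {a b : ℝ} {φ d : ℝ → ℝ}
    (hd : ∀ s ∈ Icc a b, HasDerivAt φ (d s) s) (hdc : ContinuousOn d (Icc a b))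
    {r : ℝ} (hr : r ∈ Icc a b) : |φ r| ≤ |φ b| + ∫ s in a..b, |d s| := by
  have hrb : r ≤ b := hr.2
  have hsub : uIcc r b ⊆ Icc a b := by
    rw [uIcc_of_le hrb]; exact Icc_subset_Icc hr.1 le_rfl
  have hsub2 : uIcc a r ⊆ Icc a b := by
    rw [uIcc_of_le hr.1]; exact Icc_subset_Icc le_rfl hr.2
  have hdint : IntervalIntegrable d volume r b := (hdc.mono hsub).intervalIntegrable
  have hdint2 : IntervalIntegrable d volume a r := (hdc.mono hsub2).intervalIntegrable
  have hftc : ∫ s in r..b, d s = φ b - φ r :=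
    intervalIntegral.integral_eq_sub_of_hasDerivAt (fun t ht => hd t (hsub ht)) hdint
  have h2 : |∫ s in r..b, d s| ≤ ∫ s in r..b, |d s| := by
    have := intervalIntegral.norm_integral_le_integral_norm (f := d) (μ := volume) hrb
    simpa [Real.norm_eq_abs] using this
  have h3 : ∫ s in r..b, |d s| ≤ ∫ s in a..b, |d s| := by
    have hsplit : (∫ s in a..r, |d s|) + ∫ s in r..b, |d s| = ∫ s in a..b, |d s| :=
      intervalIntegral.integral_add_adjacent_intervals hdint2.abs hdint.abs
    have hnn : 0 ≤ ∫ s in a..r, |d s| :=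
      intervalIntegral.integral_nonneg hr.1 (fun x _ => abs_nonneg _)
    linarith
  have h1 : |φ r| ≤ |φ b| + |∫ s in r..b, d s| := by
    rw [hftc]
    calc |φ r| = |φ b - (φ b - φ r)| := by ring_nf
      _ ≤ |φ b| + |φ b - φ r| := abs_sub _ _
  linarith

end Aux


/-- Poincaré-type inequality on the annulus for tangent vector fields, with
the `L^p` norm controlled by the gradient and the outer boundary trace. -/
theorem poincare_annulus (a b p : ℝ) (ha : 0 < a) (hab : a < b) (hp : 1 ≤ p) :
    ∃ C : ℝ, 0 < C ∧
      ∀ (u : ℝ × ℝ → ℝ × ℝ) (U : Set (ℝ × ℝ)),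
        IsOpen U → cann a b ⊆ U → ContDiffOn ℝ 1 u U →
        (∀ x : ℝ × ℝ, (x.1 ^ 2 + x.2 ^ 2 = a ^ 2 ∨ x.1 ^ 2 + x.2 ^ 2 = b ^ 2) →
          (u x).1 * x.1 + (u x).2 * x.2 = 0) →
        C * ∫ x in ann a b, (Real.sqrt ((u x).1 ^ 2 + (u x).2 ^ 2)) ^ p
          ≤ (∫ x in ann a b,
              (Real.sqrt ((pd1 (cmp1 u) x) ^ 2 + (pd1 (cmp2 u) x) ^ 2
                + (pd2 (cmp1 u) x) ^ 2 + (pd2 (cmp2 u) x) ^ 2)) ^ p)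
            + bInt b (fun x => (Real.sqrt ((u x).1 ^ 2 + (u x).2 ^ 2)) ^ p) := by
  have hp0 : (0:ℝ) ≤ p := by linarith
  have hba : (0:ℝ) < b - a := by linarith
  have h8p : (0:ℝ) < 8 ^ p := Real.rpow_pos_of_pos (by norm_num) p
  have hbap : (0:ℝ) < (b - a) ^ (p - 1) := Real.rpow_pos_of_pos hba (p - 1)
  have hpi : -π ≤ π := by linarith [Real.pi_pos]
  set A : ℝ := (b - a) * 8 ^ p * (1 + (b - a) ^ (p - 1) * b / a) + 1 with hA
  have hA0 : 0 < A := by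
    rw [hA]
    have h1 : (0:ℝ) < (b - a) ^ (p - 1) * b / a :=
      div_pos (mul_pos hbap (lt_trans ha hab)) ha
    have h2 : (0:ℝ) < 1 + (b - a) ^ (p - 1) * b / a := by linarith
    have h3 := mul_pos (mul_pos hba h8p) h2
    linarith
  refine ⟨A⁻¹, inv_pos.2 hA0, ?_⟩
  intro u U hUo hUsub hu _
  have hann_sub : ann a b ⊆ cann a b := fun x hx => ⟨hx.1.le, hx.2.le⟩
  have hann_meas : MeasurableSet (ann a b) := by
    have : IsOpen (ann a b) := by
      apply IsOpen.inter
      · exact isOpen_lt continuous_const ((continuous_fst.pow 2).add (continuous_snd.pow 2))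
      · exact isOpen_lt ((continuous_fst.pow 2).add (continuous_snd.pow 2)) continuous_const
    exact this.measurableSet
  -- abbreviations
  set N : ℝ × ℝ → ℝ := fun x => Real.sqrt ((u x).1 ^ 2 + (u x).2 ^ 2) with hN
  set Fs : ℝ × ℝ → ℝ := fun x => Real.sqrt ((pd1 (cmp1 u) x) ^ 2 + (pd1 (cmp2 u) x) ^ 2
      + (pd2 (cmp1 u) x) ^ 2 + (pd2 (cmp2 u) x) ^ 2) with hFs
  set Fd : ℝ × ℝ → ℝ := fun x => Real.sqrt ((fderiv ℝ u x (1, 0)).1 ^ 2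
      + (fderiv ℝ u x (1, 0)).2 ^ 2 + (fderiv ℝ u x (0, 1)).1 ^ 2
      + (fderiv ℝ u x (0, 1)).2 ^ 2) with hFd
  have hdiff : ∀ x ∈ U, DifferentiableAt ℝ u x := fun x hx =>
    (hu.differentiableOn one_ne_zero).differentiableAt (hUo.mem_nhds hx)
  have hFeq : ∀ x ∈ U, Fs x = Fd x := by
    intro x hx
    have hdx := hdiff x hx
    have h1 : fderiv ℝ (fun y => (u y).1) x
        = (ContinuousLinearMap.fst ℝ ℝ ℝ).comp (fderiv ℝ u x) := hdx.hasFDerivAt.fst.fderiv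
    have h2 : fderiv ℝ (fun y => (u y).2) x
        = (ContinuousLinearMap.snd ℝ ℝ ℝ).comp (fderiv ℝ u x) := hdx.hasFDerivAt.snd.fderiv
    have e1 : pd1 (cmp1 u) x = (fderiv ℝ u x (1, 0)).1 := by
      show fderiv ℝ (fun y => (u y).1) x (1, 0) = _
      rw [h1]; rfl
    have e2 : pd1 (cmp2 u) x = (fderiv ℝ u x (1, 0)).2 := by
      show fderiv ℝ (fun y => (u y).2) x (1, 0) = _
      rw [h2]; rfl
    have e3 : pd2 (cmp1 u) x = (fderiv ℝ u x (0, 1)).1 := by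
      show fderiv ℝ (fun y => (u y).1) x (0, 1) = _
      rw [h1]; rfl
    have e4 : pd2 (cmp2 u) x = (fderiv ℝ u x (0, 1)).2 := by
      show fderiv ℝ (fun y => (u y).2) x (0, 1) = _
      rw [h2]; rfl
    simp only [hFs, hFd]
    rw [e1, e2, e3, e4]
  -- continuity facts
  have hucont : ContinuousOn u U := hu.continuousOn
  have hNcontU : ContinuousOn N U := by
    rw [hN]
    apply ContinuousOn.sqrt
    exact ((hucont.fst.pow 2).add (hucont.snd.pow 2))
  have hDcont : ContinuousOn (fun x => fderiv ℝ u x) U :=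
    hu.continuousOn_fderiv_of_isOpen hUo le_rfl
  have happly : ∀ v : ℝ × ℝ, ContinuousOn (fun x => fderiv ℝ u x v) U := fun v =>
    (ContinuousLinearMap.apply ℝ (ℝ × ℝ) v).continuous.comp_continuousOn hDcont
  have hFdcontU : ContinuousOn Fd U := by
    rw [hFd]
    apply ContinuousOn.sqrt
    apply ContinuousOn.add
    apply ContinuousOn.add
    apply ContinuousOn.add
    · exact ((happly (1, 0)).fst.pow 2)
    · exact ((happly (1, 0)).snd.pow 2)
    · exact ((happly (0, 1)).fst.pow 2)
    · exact ((happly (0, 1)).snd.pow 2)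
  have hrpowc : ContinuousOn (fun t : ℝ => t ^ p) (Set.Ici (0:ℝ)) := fun x _ =>
    (Real.continuousAt_rpow_const x p (Or.inr hp0)).continuousWithinAt
  -- clamped global functions
  set cl : ℝ → ℝ := fun s => max a (min s b) with hcl
  have hcl_cont : Continuous cl := continuous_const.max (continuous_id.min continuous_const)
  have hcl_mem : ∀ s, a ≤ cl s ∧ cl s ≤ b := fun s =>
    ⟨le_max_left _ _, max_le hab.le (min_le_right s b)⟩
  have hcl_id : ∀ s ∈ Set.Icc a b, cl s = s := by
    intro s hs
    rw [hcl]
    simp only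
    rw [min_eq_left hs.2, max_eq_right hs.1]
  set Q : ℝ × ℝ → ℝ × ℝ := fun z => (cl z.1 * Real.cos z.2, cl z.1 * Real.sin z.2) with hQ
  have hQcont : Continuous Q := by
    rw [hQ]; fun_prop
  have hQmem : ∀ z, Q z ∈ cann a b := fun z => PA.mem_cann ha.le (hcl_mem z.1).1 (hcl_mem z.1).2
  have hQU : ∀ z, Q z ∈ U := fun z => hUsub (hQmem z)
  set Ψ : ℝ × ℝ → ℝ := fun z => N (Q z) ^ p with hΨ
  set Φ : ℝ × ℝ → ℝ := fun z => Fd (Q z) ^ p with hΦ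
  have hNQ : Continuous fun z => N (Q z) :=
    (hNcontU.mono hUsub).comp_continuous hQcont hQmem
  have hFdQ : Continuous fun z => Fd (Q z) :=
    (hFdcontU.mono hUsub).comp_continuous hQcont hQmem
  have hΨcont : Continuous Ψ := by
    rw [hΨ]
    exact hrpowc.comp_continuous hNQ (fun z => Real.sqrt_nonneg _)
  have hΦcont : Continuous Φ := by
    rw [hΦ]
    exact hrpowc.comp_continuous hFdQ (fun z => Real.sqrt_nonneg _)
  have hΨnn : ∀ z, 0 ≤ Ψ z := fun z => Real.rpow_nonneg (Real.sqrt_nonneg _) p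
  have hΦnn : ∀ z, 0 ≤ Φ z := fun z => Real.rpow_nonneg (Real.sqrt_nonneg _) p
  -- the ray integral of the gradient
  set Hc : ℝ → ℝ := fun θ => ∫ s in a..b, Φ (s, θ) with hHc
  have hHc_cont : Continuous Hc := by
    rw [hHc]
    apply intervalIntegral.continuous_parametric_intervalIntegral_of_continuous' (f := fun θ s => Φ (s, θ))
    exact hΦcont.comp (continuous_snd.prodMk continuous_fst)
  have hHc_nn : ∀ θ, 0 ≤ Hc θ := fun θ =>
    intervalIntegral.integral_nonneg hab.le (fun s _ => hΦnn _)
  -- ray membership and continuity along rays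
  have hmemU : ∀ (θ : ℝ), ∀ s ∈ Set.Icc a b, ((s * Real.cos θ, s * Real.sin θ) : ℝ × ℝ) ∈ U :=
    fun θ s hs => hUsub (PA.mem_cann ha.le hs.1 hs.2)
  have hray_cont : ∀ θ : ℝ, ContinuousOn (fun s => fderiv ℝ u (s * Real.cos θ, s * Real.sin θ))
      (Set.Icc a b) := by
    intro θ
    apply hDcont.comp (Continuous.continuousOn (by fun_prop)) (hmemU θ)
  have hFdray_cont : ∀ θ : ℝ, ContinuousOn
      (fun s => Fd (s * Real.cos θ, s * Real.sin θ)) (Set.Icc a b) := by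
    intro θ
    exact hFdcontU.comp (Continuous.continuousOn (by fun_prop)) (hmemU θ)
  have hNray_cont : ∀ θ : ℝ, ContinuousOn
      (fun s => N (s * Real.cos θ, s * Real.sin θ)) (Set.Icc a b) := by
    intro θ
    exact hNcontU.comp (Continuous.continuousOn (by fun_prop)) (hmemU θ)
  -- directional derivative bound
  have hdirb : ∀ (θ : ℝ), ∀ x ∈ U,
      Real.sqrt ((fderiv ℝ u x (Real.cos θ, Real.sin θ)).1 ^ 2
        + (fderiv ℝ u x (Real.cos θ, Real.sin θ)).2 ^ 2) ≤ Fd x := by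
    intro θ x _
    have hv : ((Real.cos θ, Real.sin θ) : ℝ × ℝ)
        = Real.cos θ • ((1:ℝ), (0:ℝ)) + Real.sin θ • ((0:ℝ), (1:ℝ)) := by
      simp [Prod.ext_iff]
    rw [hv, map_add, _root_.map_smul, _root_.map_smul]
    rw [hFd]
    apply Real.sqrt_le_sqrt
    have hcs := Real.sin_sq_add_cos_sq θ
    set A1 := (fderiv ℝ u x (1, 0)).1
    set A2 := (fderiv ℝ u x (1, 0)).2
    set B1 := (fderiv ℝ u x (0, 1)).1
    set B2 := (fderiv ℝ u x (0, 1)).2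
    have e1 : (Real.cos θ • fderiv ℝ u x (1, 0) + Real.sin θ • fderiv ℝ u x (0, 1)).1
        = Real.cos θ * A1 + Real.sin θ * B1 := rfl
    have e2 : (Real.cos θ • fderiv ℝ u x (1, 0) + Real.sin θ • fderiv ℝ u x (0, 1)).2
        = Real.cos θ * A2 + Real.sin θ * B2 := rfl
    rw [e1, e2]
    nlinarith [sq_nonneg (Real.sin θ * A1 - Real.cos θ * B1),
      sq_nonneg (Real.sin θ * A2 - Real.cos θ * B2)]
  -- the ray bound
  have hray : ∀ (θ : ℝ), ∀ r ∈ Set.Icc a b,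
      N (r * Real.cos θ, r * Real.sin θ) ≤ 2 * N (b * Real.cos θ, b * Real.sin θ)
        + 2 * ∫ s in a..b, Fd (s * Real.cos θ, s * Real.sin θ) := by
    intro θ r hr
    have hγ : ∀ s : ℝ, HasDerivAt (fun t : ℝ => ((t * Real.cos θ, t * Real.sin θ) : ℝ × ℝ))
        (Real.cos θ, Real.sin θ) s := fun s =>
      (hasDerivAt_mul_const (Real.cos θ)).prodMk (hasDerivAt_mul_const (Real.sin θ))
    have key : ∀ (proj : (ℝ × ℝ) →L[ℝ] ℝ),
        (∀ v : ℝ × ℝ, |proj v| ≤ Real.sqrt (v.1 ^ 2 + v.2 ^ 2)) →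
        |proj (u (r * Real.cos θ, r * Real.sin θ))|
          ≤ |proj (u (b * Real.cos θ, b * Real.sin θ))|
            + ∫ s in a..b, Fd (s * Real.cos θ, s * Real.sin θ) := by
      intro proj hproj
      have hφd : ∀ s ∈ Set.Icc a b,
          HasDerivAt (fun t => proj (u (t * Real.cos θ, t * Real.sin θ)))
          (proj ((fderiv ℝ u (s * Real.cos θ, s * Real.sin θ)) (Real.cos θ, Real.sin θ))) s := by
        intro s hs
        exact (proj.hasFDerivAt.comp _
          (hdiff _ (hmemU θ s hs)).hasFDerivAt).comp_hasDerivAt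
            (f := fun t : ℝ => ((t * Real.cos θ, t * Real.sin θ) : ℝ × ℝ)) (x := s) (hγ s)
      have hdc : ContinuousOn
          (fun s => proj ((fderiv ℝ u (s * Real.cos θ, s * Real.sin θ))
            (Real.cos θ, Real.sin θ))) (Set.Icc a b) := by
        apply proj.continuous.comp_continuousOn
        exact (ContinuousLinearMap.apply ℝ (ℝ × ℝ)
          (Real.cos θ, Real.sin θ)).continuous.comp_continuousOn (hray_cont θ)
      have h1 := PA.comp_bound hφd hdc hr
      have h2 : (∫ s in a..b,
            |proj ((fderiv ℝ u (s * Real.cos θ, s * Real.sin θ)) (Real.cos θ, Real.sin θ))|)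
          ≤ ∫ s in a..b, Fd (s * Real.cos θ, s * Real.sin θ) := by
        apply intervalIntegral.integral_mono_on hab.le
        · exact (hdc.abs.mono (by rw [Set.uIcc_of_le hab.le])).intervalIntegrable
        · exact ((hFdray_cont θ).mono (by rw [Set.uIcc_of_le hab.le])).intervalIntegrable
        · intro s hs
          exact (hproj _).trans (hdirb θ _ (hmemU θ s hs))
      linarith
    have k1 := key (ContinuousLinearMap.fst ℝ ℝ ℝ) (fun v => PA.abs_le_sqrt_left v.1 v.2)
    have k2 := key (ContinuousLinearMap.snd ℝ ℝ ℝ) (fun v => PA.abs_le_sqrt_right v.1 v.2)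
    have hup : N (r * Real.cos θ, r * Real.sin θ)
        ≤ |(u (r * Real.cos θ, r * Real.sin θ)).1| + |(u (r * Real.cos θ, r * Real.sin θ)).2| := by
      rw [hN]; exact PA.sqrt_le_abs_add_abs _ _
    have hd1 : |(u (b * Real.cos θ, b * Real.sin θ)).1|
        ≤ N (b * Real.cos θ, b * Real.sin θ) := by
      rw [hN]; exact PA.abs_le_sqrt_left _ _
    have hd2 : |(u (b * Real.cos θ, b * Real.sin θ)).2|
        ≤ N (b * Real.cos θ, b * Real.sin θ) := by
      rw [hN]; exact PA.abs_le_sqrt_right _ _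
    have e1 : ∀ v : ℝ × ℝ, (ContinuousLinearMap.fst ℝ ℝ ℝ) v = v.1 := fun _ => rfl
    have e2 : ∀ v : ℝ × ℝ, (ContinuousLinearMap.snd ℝ ℝ ℝ) v = v.2 := fun _ => rfl
    rw [e1, e1] at k1
    rw [e2, e2] at k2
    linarith
  -- powered ray bound
  have hraypow : ∀ (θ : ℝ), ∀ r ∈ Set.Icc a b,
      Ψ (r, θ) ≤ 8 ^ p * Ψ (b, θ) + 8 ^ p * (b - a) ^ (p - 1) * Hc θ := by
    intro θ r hr
    have hΨr : Ψ (r, θ) = N (r * Real.cos θ, r * Real.sin θ) ^ p := by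
      rw [hΨ, hQ]; simp only; rw [hcl_id r hr]
    have hΨb : Ψ (b, θ) = N (b * Real.cos θ, b * Real.sin θ) ^ p := by
      rw [hΨ, hQ]; simp only; rw [hcl_id b (Set.right_mem_Icc.2 hab.le)]
    set G : ℝ := ∫ s in a..b, Fd (s * Real.cos θ, s * Real.sin θ) with hG
    have hG0 : 0 ≤ G := intervalIntegral.integral_nonneg hab.le
      (fun s _ => Real.sqrt_nonneg _)
    have hNb0 : 0 ≤ N (b * Real.cos θ, b * Real.sin θ) := Real.sqrt_nonneg _
    have hjen : G ^ p ≤ (b - a) ^ (p - 1) * Hc θ := by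
      have hHceq : Hc θ = ∫ s in a..b, Fd (s * Real.cos θ, s * Real.sin θ) ^ p := by
        rw [hHc]
        apply intervalIntegral.integral_congr
        intro s hs
        rw [Set.uIcc_of_le hab.le] at hs
        rw [hΦ, hQ]; simp only; rw [hcl_id s hs]
      rw [hHceq]
      exact PA.jensen_rpow hab hp (hFdray_cont θ) (fun s _ => Real.sqrt_nonneg _)
    have hxle : N (r * Real.cos θ, r * Real.sin θ)
        ≤ 2 * N (b * Real.cos θ, b * Real.sin θ) + 2 * G := hray θ r hr
    have hx0 : 0 ≤ N (r * Real.cos θ, r * Real.sin θ) := Real.sqrt_nonneg _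
    have step1 : N (r * Real.cos θ, r * Real.sin θ) ^ p
        ≤ (2 * N (b * Real.cos θ, b * Real.sin θ) + 2 * G) ^ p :=
      Real.rpow_le_rpow hx0 hxle hp0
    have step2 : (2 * N (b * Real.cos θ, b * Real.sin θ) + 2 * G) ^ p
        ≤ 2 ^ p * ((2 * N (b * Real.cos θ, b * Real.sin θ)) ^ p + (2 * G) ^ p) :=
      PA.rpow_add_le hp (by linarith) (by linarith)
    have e2N : (2 * N (b * Real.cos θ, b * Real.sin θ)) ^ p
        = 2 ^ p * N (b * Real.cos θ, b * Real.sin θ) ^ p := Real.mul_rpow (by norm_num) hNb0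
    have e2G : (2 * G) ^ p = 2 ^ p * G ^ p := Real.mul_rpow (by norm_num) hG0
    have h4p : (2:ℝ) ^ p * 2 ^ p = 4 ^ p := by
      rw [← Real.mul_rpow (by norm_num) (by norm_num)]; norm_num
    have h48 : (4:ℝ) ^ p ≤ 8 ^ p := Real.rpow_le_rpow (by norm_num) (by norm_num) hp0
    have hNbp : 0 ≤ N (b * Real.cos θ, b * Real.sin θ) ^ p := Real.rpow_nonneg hNb0 p
    have hGp : 0 ≤ G ^ p := Real.rpow_nonneg hG0 p
    have h2p0 : (0:ℝ) ≤ 2 ^ p := Real.rpow_nonneg (by norm_num) p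
    rw [hΨr, hΨb]
    have heq : 2 ^ p * ((2 * N (b * Real.cos θ, b * Real.sin θ)) ^ p + (2 * G) ^ p)
        = 4 ^ p * N (b * Real.cos θ, b * Real.sin θ) ^ p + 4 ^ p * G ^ p := by
      rw [e2N, e2G, ← h4p]; ring
    have h4p0 : (0:ℝ) ≤ 4 ^ p := Real.rpow_nonneg (by norm_num) p
    have t1 : 4 ^ p * G ^ p ≤ 4 ^ p * ((b - a) ^ (p - 1) * Hc θ) :=
      mul_le_mul_of_nonneg_left hjen h4p0
    have t2 : 4 ^ p * N (b * Real.cos θ, b * Real.sin θ) ^ p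
        ≤ 8 ^ p * N (b * Real.cos θ, b * Real.sin θ) ^ p :=
      mul_le_mul_of_nonneg_right h48 hNbp
    have t3 : 4 ^ p * ((b - a) ^ (p - 1) * Hc θ) ≤ 8 ^ p * ((b - a) ^ (p - 1) * Hc θ) :=
      mul_le_mul_of_nonneg_right h48 (mul_nonneg hbap.le (hHc_nn θ))
    have := step1.trans step2
    rw [heq] at this
    calc N (r * Real.cos θ, r * Real.sin θ) ^ p
        ≤ 4 ^ p * N (b * Real.cos θ, b * Real.sin θ) ^ p + 4 ^ p * G ^ p := this
      _ ≤ 8 ^ p * N (b * Real.cos θ, b * Real.sin θ) ^ p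
            + 8 ^ p * (b - a) ^ (p - 1) * Hc θ := by
          have : 8 ^ p * ((b - a) ^ (p - 1) * Hc θ) = 8 ^ p * (b - a) ^ (p - 1) * Hc θ := by ring
          linarith
  -- polar representations
  have hNp_cann : ContinuousOn (fun x => N x ^ p) (cann a b) :=
    (hNcontU.mono hUsub).rpow_const (fun x _ => Or.inr hp0)
  have hFdp_cann : ContinuousOn (fun x => Fd x ^ p) (cann a b) :=
    (hFdcontU.mono hUsub).rpow_const (fun x _ => Or.inr hp0)
  have hLHSpolar : (∫ x in ann a b, N x ^ p)
      = ∫ r in a..b, (∫ θ in (-π)..π, r * Ψ (r, θ)) := by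
    rw [PA.polar_ann ha hab hNp_cann]
    apply intervalIntegral.integral_congr
    intro r hr
    rw [Set.uIcc_of_le hab.le] at hr
    apply intervalIntegral.integral_congr
    intro θ _
    simp only [hΨ, hQ]
    rw [hcl_id r hr]
  have hK1polar : (∫ x in ann a b, Fs x ^ p)
      = ∫ r in a..b, (∫ θ in (-π)..π, r * Φ (r, θ)) := by
    have h0 : (∫ x in ann a b, Fs x ^ p) = ∫ x in ann a b, Fd x ^ p := by
      apply setIntegral_congr_fun hann_meas
      intro x hx
      simp only
      rw [hFeq x (hUsub (hann_sub hx))]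
    rw [h0, PA.polar_ann ha hab hFdp_cann]
    apply intervalIntegral.integral_congr
    intro r hr
    rw [Set.uIcc_of_le hab.le] at hr
    apply intervalIntegral.integral_congr
    intro θ _
    simp only [hΦ, hQ]
    rw [hcl_id r hr]
  set c₂ : ℝ := 8 ^ p * (b - a) ^ (p - 1) * b with hc₂
  set RHSf : ℝ → ℝ := fun θ => 8 ^ p * b * Ψ (b, θ) + c₂ * Hc θ with hRHSf
  have hΨb_cont : Continuous fun θ => Ψ (b, θ) :=
    hΨcont.comp (continuous_const.prodMk continuous_id)
  have hRHSf_cont : Continuous RHSf := by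
    rw [hRHSf]
    exact (continuous_const.mul hΨb_cont).add (continuous_const.mul hHc_cont)
  have hinner : ∀ r ∈ Set.Icc a b,
      (∫ θ in (-π)..π, r * Ψ (r, θ)) ≤ ∫ θ in (-π)..π, RHSf θ := by
    intro r hr
    apply intervalIntegral.integral_mono_on hpi
    · exact (continuous_const.mul
        (hΨcont.comp (continuous_const.prodMk continuous_id))).intervalIntegrable _ _
    · exact hRHSf_cont.intervalIntegrable _ _
    · intro θ _
      have h1 := hraypow θ r hr
      have h2 : r * Ψ (r, θ) ≤ b * Ψ (r, θ) := mul_le_mul_of_nonneg_right hr.2 (hΨnn (r, θ))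
      have h3 : b * Ψ (r, θ) ≤ b * (8 ^ p * Ψ (b, θ) + 8 ^ p * (b - a) ^ (p - 1) * Hc θ) :=
        mul_le_mul_of_nonneg_left h1 (by linarith)
      have h4 : b * (8 ^ p * Ψ (b, θ) + 8 ^ p * (b - a) ^ (p - 1) * Hc θ) = RHSf θ := by
        rw [hRHSf, hc₂]; ring
      linarith
  have hcont1 : Continuous fun r => ∫ θ in (-π)..π, r * Ψ (r, θ) := by
    apply intervalIntegral.continuous_parametric_intervalIntegral_of_continuous'
      (f := fun r θ => r * Ψ (r, θ))
    exact continuous_fst.mul (hΨcont.comp (continuous_fst.prodMk continuous_snd))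
  have houter : (∫ r in a..b, (∫ θ in (-π)..π, r * Ψ (r, θ)))
      ≤ (b - a) * ∫ θ in (-π)..π, RHSf θ := by
    have h1 : (∫ r in a..b, (∫ θ in (-π)..π, r * Ψ (r, θ)))
        ≤ ∫ _r in a..b, (∫ θ in (-π)..π, RHSf θ) := by
      apply intervalIntegral.integral_mono_on hab.le
      · exact hcont1.intervalIntegrable _ _
      · exact intervalIntegrable_const
      · exact hinner
    rwa [intervalIntegral.integral_const, smul_eq_mul] at h1
  have hintΨb : IntervalIntegrable (fun θ => 8 ^ p * b * Ψ (b, θ)) volume (-π) π :=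
    (continuous_const.mul hΨb_cont).intervalIntegrable _ _
  have hintHc : IntervalIntegrable (fun θ => c₂ * Hc θ) volume (-π) π :=
    (continuous_const.mul hHc_cont).intervalIntegrable _ _
  have hsplit : (∫ θ in (-π)..π, RHSf θ)
      = 8 ^ p * b * (∫ θ in (-π)..π, Ψ (b, θ)) + c₂ * ∫ θ in (-π)..π, Hc θ := by
    rw [hRHSf]
    rw [intervalIntegral.integral_add hintΨb hintHc,
      intervalIntegral.integral_const_mul, intervalIntegral.integral_const_mul]
  -- identify the boundary term
  have hT1 : bInt b (fun x => N x ^ p) = b * ∫ θ in (-π)..π, Ψ (b, θ) := by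
    have hper : Function.Periodic (fun θ => N (b * Real.cos θ, b * Real.sin θ) ^ p)
        (2 * π) := by
      intro θ
      simp only [Real.cos_add_two_pi, Real.sin_add_two_pi]
    have hshift := hper.intervalIntegral_add_eq 0 (-π)
    rw [zero_add] at hshift
    have hpieq : -π + 2 * π = π := by ring
    rw [hpieq] at hshift
    have hb2 : bInt b (fun x => N x ^ p)
        = ∫ θ in (0:ℝ)..(2*π), N (b * Real.cos θ, b * Real.sin θ) ^ p * b := rfl
    have hΨbeq : (∫ θ in (-π)..π, Ψ (b, θ))
        = ∫ θ in (-π)..π, N (b * Real.cos θ, b * Real.sin θ) ^ p := by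
      apply intervalIntegral.integral_congr
      intro θ _
      simp only [hΨ, hQ]
      rw [hcl_id b (Set.right_mem_Icc.2 hab.le)]
    rw [hb2, intervalIntegral.integral_mul_const, hshift, hΨbeq]
    ring
  -- gradient term
  have hT2 : a * (∫ θ in (-π)..π, Hc θ) ≤ ∫ x in ann a b, Fs x ^ p := by
    have hswap : (∫ θ in (-π)..π, Hc θ) = ∫ s in a..b, (∫ θ in (-π)..π, Φ (s, θ)) := by
      rw [hHc]
      exact PA.swap_cont (f := fun θ s => Φ (s, θ))
        (hΦcont.comp (continuous_snd.prodMk continuous_fst)) hpi hab.le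
    have hcont2 : Continuous fun s => ∫ θ in (-π)..π, Φ (s, θ) := by
      apply intervalIntegral.continuous_parametric_intervalIntegral_of_continuous'
        (f := fun s θ => Φ (s, θ))
      exact hΦcont.comp (continuous_fst.prodMk continuous_snd)
    have hcont3 : Continuous fun s => ∫ θ in (-π)..π, s * Φ (s, θ) := by
      apply intervalIntegral.continuous_parametric_intervalIntegral_of_continuous'
        (f := fun s θ => s * Φ (s, θ))
      exact continuous_fst.mul (hΦcont.comp (continuous_fst.prodMk continuous_snd))
    rw [hswap, ← intervalIntegral.integral_const_mul, hK1polar]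
    apply intervalIntegral.integral_mono_on hab.le
    · exact (continuous_const.mul hcont2).intervalIntegrable _ _
    · exact hcont3.intervalIntegrable _ _
    · intro s hs
      rw [← intervalIntegral.integral_const_mul]
      apply intervalIntegral.integral_mono_on hpi
      · exact (continuous_const.mul
          (hΦcont.comp (continuous_const.prodMk continuous_id))).intervalIntegrable _ _
      · exact (continuous_const.mul
          (hΦcont.comp (continuous_const.prodMk continuous_id))).intervalIntegrable _ _
      · intro θ _
        exact mul_le_mul_of_nonneg_right hs.1 (hΦnn (s, θ))
  -- assembly
  set L : ℝ := ∫ x in ann a b, N x ^ p with hL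
  set K1 : ℝ := ∫ x in ann a b, Fs x ^ p with hK1
  set K2 : ℝ := bInt b (fun x => N x ^ p) with hK2
  set T1 : ℝ := ∫ θ in (-π)..π, Ψ (b, θ) with hT1d
  set T2 : ℝ := ∫ θ in (-π)..π, Hc θ with hT2d
  have hT1nn : 0 ≤ T1 := intervalIntegral.integral_nonneg hpi (fun θ _ => hΨnn _)
  have hT2nn : 0 ≤ T2 := intervalIntegral.integral_nonneg hpi (fun θ _ => hHc_nn _)
  have hK1nn : 0 ≤ K1 := setIntegral_nonneg hann_meas
    (fun x _ => Real.rpow_nonneg (Real.sqrt_nonneg _) p)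
  have hK2nn : 0 ≤ K2 := by
    rw [hT1]
    have hb0 : (0:ℝ) < b := lt_trans ha hab
    nlinarith
  have hLbound : L ≤ (b - a) * (8 ^ p * b * T1 + c₂ * T2) := by
    calc L = (∫ r in a..b, (∫ θ in (-π)..π, r * Ψ (r, θ))) := hLHSpolar
      _ ≤ (b - a) * ∫ θ in (-π)..π, RHSf θ := houter
      _ = (b - a) * (8 ^ p * b * T1 + c₂ * T2) := by rw [hsplit]
  have hbT1 : b * T1 = K2 := hT1.symm
  have haT2 : a * T2 ≤ K1 := hT2
  have hfinal : L ≤ A * (K1 + K2) := by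
    have e1 : (b - a) * (8 ^ p * b * T1 + c₂ * T2)
        = (b - a) * 8 ^ p * (b * T1) + (b - a) * c₂ * T2 := by ring
    have e2 : (b - a) * c₂ * T2 ≤ (b - a) * c₂ / a * K1 := by
      have hc₂0 : 0 ≤ c₂ := by
        rw [hc₂]
        have : (0:ℝ) < b := lt_trans ha hab
        positivity
      have h5 : (b - a) * c₂ / a * (a * T2) ≤ (b - a) * c₂ / a * K1 :=
        mul_le_mul_of_nonneg_left haT2 (by positivity)
      have h6 : (b - a) * c₂ / a * (a * T2) = (b - a) * c₂ * T2 := by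
        field_simp
      linarith
    have hY : (0:ℝ) < (b - a) ^ (p - 1) * b / a :=
      div_pos (mul_pos hbap (lt_trans ha hab)) ha
    have hX : (0:ℝ) < (b - a) * 8 ^ p := mul_pos hba h8p
    have hexpand : (b - a) * 8 ^ p * (1 + (b - a) ^ (p - 1) * b / a)
        = (b - a) * 8 ^ p + (b - a) * 8 ^ p * ((b - a) ^ (p - 1) * b / a) := by ring
    have hXY : (0:ℝ) ≤ (b - a) * 8 ^ p * ((b - a) ^ (p - 1) * b / a) :=
      mul_nonneg hX.le hY.le
    have hcoef1 : (b - a) * 8 ^ p ≤ A := by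
      rw [hA, hexpand]
      linarith
    have hcoef2 : (b - a) * c₂ / a ≤ A := by
      rw [hA, hc₂]
      have h7 : (b - a) * (8 ^ p * (b - a) ^ (p - 1) * b) / a
          = (b - a) * 8 ^ p * ((b - a) ^ (p - 1) * b / a) := by field_simp
      rw [h7, hexpand]
      linarith
    calc L ≤ (b - a) * (8 ^ p * b * T1 + c₂ * T2) := hLbound
      _ = (b - a) * 8 ^ p * (b * T1) + (b - a) * c₂ * T2 := e1
      _ ≤ (b - a) * 8 ^ p * K2 + (b - a) * c₂ / a * K1 := by
          rw [hbT1]; linarith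
      _ ≤ A * K2 + A * K1 :=
          add_le_add (mul_le_mul_of_nonneg_right hcoef1 hK2nn)
            (mul_le_mul_of_nonneg_right hcoef2 hK1nn)
      _ = A * (K1 + K2) := by ring
  have hgoal : A⁻¹ * L ≤ K1 + K2 := by
    have h8 := mul_le_mul_of_nonneg_left hfinal (inv_nonneg.2 hA0.le)
    rwa [← mul_assoc, inv_mul_cancel₀ hA0.ne', one_mul] at h8
  exact hgoal
end
end

section
/- Let 0 < a < b. For every ε > 0 and all real numbers a₁, a₂, there exists a constant C ≥ 0 (depending on ε, a₁, a₂, a, b) such that for every vector field v : ℝ² → ℝ² that is continuously differentiable on a neighborhood of the closed annulus {x : a ≤ |x| ≤ b}: |a₁ ∮_{∂B(0,b)} v_τ² ds + a₂ ∮_{∂B(0,a)} v_τ² ds| ≤ ε ∫_Ω ‖Dv(x)‖² dx + C ∫_Ω |v(x)|² dx, where ‖Dv(x)‖ denotes the Frobenius norm of the Jacobian matrix of v at x. -/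
open Real MeasureTheory

noncomputable section

/- ======================= Auxiliary material ======================= -/

/-- The radial point `(r cos θ, r sin θ)`. -/
def pt (r θ : ℝ) : ℝ × ℝ := (r * Real.cos θ, r * Real.sin θ)

lemma pt_mem_cann {a b r : ℝ} (θ : ℝ) (ha : 0 ≤ a) (h1 : a ≤ r) (h2 : r ≤ b) :
    pt r θ ∈ cann a b := by
  have hsq : (pt r θ).1 ^ 2 + (pt r θ).2 ^ 2 = r ^ 2 := by
    simp only [pt]; nlinarith [sin_sq_add_cos_sq θ]
  constructor <;> rw [hsq] <;> nlinarith

lemma cann_bound {a b : ℝ} {x : ℝ × ℝ} (hx : x ∈ cann a b) (hb : 0 ≤ b) :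
    |x.1| ≤ b ∧ |x.2| ≤ b := by
  obtain ⟨_, h2⟩ := hx
  constructor <;> rw [abs_le] <;> constructor <;> nlinarith [sq_nonneg x.1, sq_nonneg x.2]

lemma isOpen_ann (a b : ℝ) : IsOpen (ann a b) := by
  have hf : Continuous fun x : ℝ × ℝ => x.1 ^ 2 + x.2 ^ 2 := by fun_prop
  exact (isOpen_lt continuous_const hf).inter (isOpen_lt hf continuous_const)

lemma isCompact_cann (a b : ℝ) (hb : 0 ≤ b) : IsCompact (cann a b) := by
  have hf : Continuous fun x : ℝ × ℝ => x.1 ^ 2 + x.2 ^ 2 := by fun_prop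
  have hclosed : IsClosed (cann a b) :=
    (isClosed_le continuous_const hf).inter (isClosed_le hf continuous_const)
  apply Metric.isCompact_of_isClosed_isBounded hclosed
  apply Bornology.IsBounded.subset (Metric.isBounded_closedBall (x := (0 : ℝ × ℝ)) (r := b))
  intro x hx
  obtain ⟨h1, h2⟩ := cann_bound hx hb
  simp only [Metric.mem_closedBall, dist_zero_right, Prod.norm_def, Real.norm_eq_abs]
  exact sup_le h1 h2

lemma fderiv_pair (f : ℝ × ℝ → ℝ) (x : ℝ × ℝ) (c s : ℝ) :
    fderiv ℝ f x (c, s) = c * pd1 f x + s * pd2 f x := by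
  have h : ((c, s) : ℝ × ℝ) = c • ((1 : ℝ), (0 : ℝ)) + s • ((0 : ℝ), (1 : ℝ)) := by
    simp [Prod.ext_iff]
  rw [h, map_add, _root_.map_smul, _root_.map_smul, smul_eq_mul, smul_eq_mul, pd1, pd2]

lemma abs_fderiv_cs (f : ℝ × ℝ → ℝ) (x : ℝ × ℝ) (θ : ℝ) :
    |fderiv ℝ f x (Real.cos θ, Real.sin θ)| ≤ |pd1 f x| + |pd2 f x| := by
  rw [fderiv_pair]
  calc |Real.cos θ * pd1 f x + Real.sin θ * pd2 f x|
      ≤ |Real.cos θ * pd1 f x| + |Real.sin θ * pd2 f x| := abs_add_le _ _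
    _ ≤ |pd1 f x| + |pd2 f x| := by
        rw [abs_mul, abs_mul]
        have h1 := Real.abs_cos_le_one θ
        have h2 := Real.abs_sin_le_one θ
        have := abs_nonneg (pd1 f x)
        have := abs_nonneg (pd2 f x)
        nlinarith

lemma alg_bound (di bb δ E g dg u w A B N Q : ℝ) (hδ : 0 < δ) (hbb : 0 < bb) (hdi : 0 ≤ di)
    (hu : |u| ≤ di) (hw : |w| ≤ 1) (hB : 0 ≤ B)
    (hg : |g| ≤ bb * B) (hdg : |dg| ≤ bb * A + B)
    (hA2 : A ^ 2 ≤ 4 * Q) (hB2 : B ^ 2 ≤ 2 * N) (hE : δ * E = bb ^ 4) :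
    |u * g ^ 2 + w * (2 * g * dg)| ≤ (2 * bb ^ 2 * di + 4 * bb + 2 * E) * N + 4 * δ * Q := by
  have hbb4 : (0:ℝ) < bb^4 := by positivity
  have hEpos : 0 < E := by nlinarith [mul_pos hδ hδ]
  have h1 : |u * g ^ 2 + w * (2 * g * dg)| ≤ di * (bb*B)^2 + 2 * (bb*B) * (bb*A+B) := by
    have e1 : |u * g ^ 2| ≤ di * (bb*B)^2 := by
      rw [abs_mul, abs_pow]
      have h : |g|^2 ≤ (bb*B)^2 := pow_le_pow_left₀ (abs_nonneg _) hg 2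
      nlinarith [abs_nonneg u, sq_nonneg (bb*B), abs_nonneg g]
    have e2 : |w * (2 * g * dg)| ≤ 2 * (bb*B) * (bb*A+B) := by
      rw [abs_mul, abs_mul, abs_mul]
      have hA : 0 ≤ bb * A + B := le_trans (abs_nonneg _) hdg
      have hgd : |g| * |dg| ≤ (bb*B) * (bb*A+B) :=
        mul_le_mul hg hdg (abs_nonneg _) (by positivity)
      calc |w| * (|(2:ℝ)| * |g| * |dg|) ≤ 1 * (2 * ((bb*B) * (bb*A+B))) := by
            rw [abs_two]
            apply mul_le_mul hw ?_ (by positivity) zero_le_one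
            rw [mul_assoc]
            exact mul_le_mul_of_nonneg_left hgd (by norm_num)
        _ = 2 * (bb*B) * (bb*A+B) := by ring
    calc |u * g ^ 2 + w * (2 * g * dg)| ≤ |u * g^2| + |w * (2*g*dg)| := abs_add_le _ _
      _ ≤ _ := add_le_add e1 e2
  refine h1.trans ?_
  have key : 2 * (bb*B) * (bb*A+B) ≤ δ * A^2 + E * B^2 + 2*bb*B^2 := by
    nlinarith [sq_nonneg (δ * A - bb^2 * B), hδ, sq_nonneg A, sq_nonneg B]
  have hNQ : δ * A^2 ≤ 4*δ*Q := by nlinarith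
  have hN2 : E * B^2 ≤ (2*E) * N := by nlinarith
  have hN3 : 2*bb*B^2 ≤ 4*bb*N := by nlinarith
  have hN1 : di * (bb*B)^2 ≤ (2*bb^2*di) * N := by
    nlinarith [mul_le_mul_of_nonneg_left hB2 (mul_nonneg (by positivity : (0:ℝ) ≤ bb^2) hdi)]
  linarith

set_option maxHeartbeats 1000000 in
/-- Pointwise bound used inside the trace estimate. -/
lemma ptwise_bound (v : ℝ × ℝ → ℝ × ℝ) (x : ℝ × ℝ) (θ b d δ E u w : ℝ)
    (hδ : 0 < δ) (hb : 0 < b)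
    (hx1 : |x.1| ≤ b) (hx2 : |x.2| ≤ b)
    (hu : |u| ≤ 1 / d) (hw : |w| ≤ 1) (hE : δ * E = b ^ 4) :
    |u * ((v x).1 * x.2 - (v x).2 * x.1) ^ 2 +
        w * (2 * ((v x).1 * x.2 - (v x).2 * x.1) *
          (fderiv ℝ (cmp1 v) x (Real.cos θ, Real.sin θ) * x.2 + (v x).1 * Real.sin θ -
            (fderiv ℝ (cmp2 v) x (Real.cos θ, Real.sin θ) * x.1 + (v x).2 * Real.cos θ)))|
      ≤ (2 * b ^ 2 * (1 / d) + 4 * b + 2 * E) * ((v x).1 ^ 2 + (v x).2 ^ 2)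
        + 4 * δ * (pd1 (cmp1 v) x ^ 2 + pd1 (cmp2 v) x ^ 2
            + pd2 (cmp1 v) x ^ 2 + pd2 (cmp2 v) x ^ 2) := by
  have hD1 := abs_fderiv_cs (cmp1 v) x θ
  have hD2 := abs_fderiv_cs (cmp2 v) x θ
  set A : ℝ := |pd1 (cmp1 v) x| + |pd1 (cmp2 v) x| + |pd2 (cmp1 v) x| + |pd2 (cmp2 v) x| with hA
  set B : ℝ := |(v x).1| + |(v x).2| with hB
  have hdinonneg : 0 ≤ 1 / d := le_trans (abs_nonneg _) hu
  have hgb : |(v x).1 * x.2 - (v x).2 * x.1| ≤ b * B := by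
    calc |(v x).1 * x.2 - (v x).2 * x.1| ≤ |(v x).1 * x.2| + |(v x).2 * x.1| := abs_sub _ _
      _ ≤ b * B := by
          rw [abs_mul, abs_mul, hB]
          nlinarith [abs_nonneg (v x).1, abs_nonneg (v x).2,
            mul_le_mul_of_nonneg_left hx2 (abs_nonneg (v x).1),
            mul_le_mul_of_nonneg_left hx1 (abs_nonneg (v x).2)]
  have hdgb : |fderiv ℝ (cmp1 v) x (Real.cos θ, Real.sin θ) * x.2 + (v x).1 * Real.sin θ -
      (fderiv ℝ (cmp2 v) x (Real.cos θ, Real.sin θ) * x.1 + (v x).2 * Real.cos θ)| ≤ b * A + B := by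
    have t1 : |fderiv ℝ (cmp1 v) x (Real.cos θ, Real.sin θ)| * |x.2|
        ≤ (|pd1 (cmp1 v) x| + |pd2 (cmp1 v) x|) * b :=
      mul_le_mul hD1 hx2 (abs_nonneg _) (by positivity)
    have t2 : |(v x).1| * |Real.sin θ| ≤ |(v x).1| :=
      mul_le_of_le_one_right (abs_nonneg _) (Real.abs_sin_le_one θ)
    have t3 : |fderiv ℝ (cmp2 v) x (Real.cos θ, Real.sin θ)| * |x.1|
        ≤ (|pd1 (cmp2 v) x| + |pd2 (cmp2 v) x|) * b :=
      mul_le_mul hD2 hx1 (abs_nonneg _) (by positivity)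
    have t4 : |(v x).2| * |Real.cos θ| ≤ |(v x).2| :=
      mul_le_of_le_one_right (abs_nonneg _) (Real.abs_cos_le_one θ)
    have hexp : b * A + B = (|pd1 (cmp1 v) x| + |pd2 (cmp1 v) x|) * b
        + (|pd1 (cmp2 v) x| + |pd2 (cmp2 v) x|) * b + (|(v x).1| + |(v x).2|) := by
      rw [hA, hB]; ring
    calc |fderiv ℝ (cmp1 v) x (Real.cos θ, Real.sin θ) * x.2 + (v x).1 * Real.sin θ -
        (fderiv ℝ (cmp2 v) x (Real.cos θ, Real.sin θ) * x.1 + (v x).2 * Real.cos θ)|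
        ≤ |fderiv ℝ (cmp1 v) x (Real.cos θ, Real.sin θ) * x.2 + (v x).1 * Real.sin θ|
          + |fderiv ℝ (cmp2 v) x (Real.cos θ, Real.sin θ) * x.1 + (v x).2 * Real.cos θ| := abs_sub _ _
      _ ≤ (|fderiv ℝ (cmp1 v) x (Real.cos θ, Real.sin θ) * x.2| + |(v x).1 * Real.sin θ|)
          + (|fderiv ℝ (cmp2 v) x (Real.cos θ, Real.sin θ) * x.1| + |(v x).2 * Real.cos θ|) :=
          add_le_add (abs_add_le _ _) (abs_add_le _ _)
      _ ≤ b * A + B := by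
          rw [abs_mul, abs_mul, abs_mul, abs_mul, hexp]
          linarith
  have hA2 : A ^ 2 ≤ 4 * (pd1 (cmp1 v) x ^ 2 + pd1 (cmp2 v) x ^ 2
      + pd2 (cmp1 v) x ^ 2 + pd2 (cmp2 v) x ^ 2) := by
    rw [hA]
    nlinarith [sq_abs (pd1 (cmp1 v) x), sq_abs (pd1 (cmp2 v) x), sq_abs (pd2 (cmp1 v) x),
      sq_abs (pd2 (cmp2 v) x),
      sq_nonneg (|pd1 (cmp1 v) x| - |pd1 (cmp2 v) x|),
      sq_nonneg (|pd1 (cmp1 v) x| - |pd2 (cmp1 v) x|),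
      sq_nonneg (|pd1 (cmp1 v) x| - |pd2 (cmp2 v) x|),
      sq_nonneg (|pd1 (cmp2 v) x| - |pd2 (cmp1 v) x|),
      sq_nonneg (|pd1 (cmp2 v) x| - |pd2 (cmp2 v) x|),
      sq_nonneg (|pd2 (cmp1 v) x| - |pd2 (cmp2 v) x|)]
  have hB2 : B ^ 2 ≤ 2 * ((v x).1 ^ 2 + (v x).2 ^ 2) := by
    rw [hB]
    nlinarith [sq_abs (v x).1, sq_abs (v x).2, sq_nonneg (|(v x).1| - |(v x).2|)]
  exact alg_bound (1/d) b δ E ((v x).1 * x.2 - (v x).2 * x.1)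
    (fderiv ℝ (cmp1 v) x (Real.cos θ, Real.sin θ) * x.2 + (v x).1 * Real.sin θ -
      (fderiv ℝ (cmp2 v) x (Real.cos θ, Real.sin θ) * x.1 + (v x).2 * Real.cos θ))
    u w A B ((v x).1 ^ 2 + (v x).2 ^ 2)
    (pd1 (cmp1 v) x ^ 2 + pd1 (cmp2 v) x ^ 2 + pd2 (cmp1 v) x ^ 2 + pd2 (cmp2 v) x ^ 2)
    hδ hb hdinonneg hu hw (by positivity) hgb hdgb hA2 hB2 hE

/-- 1-D FTC-based trace estimate along a ray. -/
lemma ftc_trace (a b : ℝ) (hab : a < b) (G G' p : ℝ → ℝ)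
    (hG : ∀ r ∈ Set.Icc a b, HasDerivAt G (G' r) r)
    (hG'c : ContinuousOn G' (Set.Icc a b)) (hpc : ContinuousOn p (Set.Icc a b))
    (hbound : ∀ r ∈ Set.Icc a b, ∀ w u : ℝ, |w| ≤ 1 → |u| ≤ 1 / (b - a) →
      |u * G r ^ 2 + w * (2 * G r * G' r)| ≤ p r) :
    G b ^ 2 ≤ (∫ r in a..b, p r) ∧ G a ^ 2 ≤ ∫ r in a..b, p r := by
  have hba : 0 < b - a := by linarith
  have huIcc : Set.uIcc a b = Set.Icc a b := Set.uIcc_of_le hab.le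
  have hGc : ContinuousOn G (Set.Icc a b) := fun r hr => (hG r hr).continuousAt.continuousWithinAt
  have hpint : IntervalIntegrable p volume a b := by
    rw [intervalIntegrable_iff_integrableOn_Icc_of_le hab.le]
    exact hpc.integrableOn_compact isCompact_Icc
  have main : ∀ w : ℝ → ℝ, (∀ r : ℝ, HasDerivAt w (1 / (b - a)) r) →
      (∀ r ∈ Set.Icc a b, |w r| ≤ 1) →
      w b * G b ^ 2 - w a * G a ^ 2 ≤ ∫ r in a..b, p r := by
    intro w hw hw1
    set φ' : ℝ → ℝ := fun r => (1 / (b - a)) * G r ^ 2 + w r * (2 * G r * G' r) with hφ'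
    have hwc : ContinuousOn w (Set.Icc a b) := fun r _ => (hw r).continuousAt.continuousWithinAt
    have hφ : ∀ r ∈ Set.uIcc a b, HasDerivAt (fun r => w r * G r ^ 2) (φ' r) r := by
      intro r hr
      rw [huIcc] at hr
      have h2 : HasDerivAt (fun r => G r ^ 2) (2 * G r * G' r) r := by
        have := (hG r hr).pow 2
        simp at this
        exact this
      exact (hw r).mul h2
    have hφ'c : ContinuousOn φ' (Set.Icc a b) :=
      (continuousOn_const.mul (hGc.pow 2)).add
        (hwc.mul ((continuousOn_const.mul hGc).mul hG'c))
    have hφ'int : IntervalIntegrable φ' volume a b := by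
      rw [intervalIntegrable_iff_integrableOn_Icc_of_le hab.le]
      exact hφ'c.integrableOn_compact isCompact_Icc
    have hftc := intervalIntegral.integral_eq_sub_of_hasDerivAt hφ hφ'int
    rw [← hftc]
    apply intervalIntegral.integral_mono_on hab.le hφ'int hpint
    intro r hr
    calc φ' r ≤ |φ' r| := le_abs_self _
      _ ≤ p r := by
          apply hbound r hr (w r) (1 / (b - a)) (hw1 r hr)
          rw [abs_of_nonneg (by positivity)]
  constructor
  · have := main (fun r => (r - a) / (b - a))
      (fun r => ((hasDerivAt_id r).sub_const a).div_const (b - a))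
      (by intro r hr; simp only [Set.mem_Icc] at hr
          rw [abs_of_nonneg (div_nonneg (by linarith [hr.1]) hba.le)]
          rw [div_le_one hba]; linarith [hr.2])
    rw [div_self hba.ne', show (a - a) / (b - a) = 0 by simp] at this
    linarith [this]
  · have := main (fun r => (r - b) / (b - a))
      (fun r => ((hasDerivAt_id r).sub_const b).div_const (b - a))
      (by intro r hr; simp only [abs_div, abs_of_pos hba, div_le_one hba]
          rw [abs_le]; simp at hr; constructor <;> linarith [hr.1, hr.2])
    have h1 : ((b : ℝ) - b) / (b - a) = 0 := by simp
    have h2 : ((a : ℝ) - b) / (b - a) = -1 := by field_simp; ring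
    rw [h1, h2] at this
    linarith [this]

open Set in
/-- Polar change of variables on the annulus. -/
lemma polar_eq (a b : ℝ) (ha : 0 < a) (hab : a < b) (P : ℝ × ℝ → ℝ)
    (hPc : ContinuousOn P (cann a b)) :
    ∫ x in ann a b, P x = ∫ θ in (0 : ℝ)..(2 * π), (∫ r in a..b, r * P (pt r θ)) := by
  have hb : 0 < b := ha.trans hab
  have hannm : MeasurableSet (ann a b) := (isOpen_ann a b).measurableSet
  set S : Set (ℝ × ℝ) := Ioo a b ×ˢ Ioo (-π) π with hS
  have hSm : MeasurableSet S := measurableSet_Ioo.prod measurableSet_Ioo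
  set Gf : ℝ × ℝ → ℝ := fun p => p.1 * P (pt p.1 p.2) with hGf
  have h1 : ∫ x in ann a b, P x
      = ∫ p in polarCoord.target, p.1 • (ann a b).indicator P (polarCoord.symm p) := by
    rw [integral_comp_polarCoord_symm, integral_indicator hannm]
  have h2 : ∀ p ∈ polarCoord.target, p.1 • (ann a b).indicator P (polarCoord.symm p)
      = S.indicator Gf p := by
    rintro ⟨r, θ⟩ hp
    rw [polarCoord_target] at hp
    obtain ⟨hr, hθ⟩ := hp
    simp only [mem_Ioi] at hr
    have hsymm : polarCoord.symm (r, θ) = pt r θ := by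
      rw [polarCoord_symm_apply]; rfl
    have hsq : (pt r θ).1 ^ 2 + (pt r θ).2 ^ 2 = r ^ 2 := by
      simp only [pt]; nlinarith [sin_sq_add_cos_sq θ]
    by_cases hmem : r ∈ Ioo a b
    · have hann : pt r θ ∈ ann a b := by
        constructor <;> rw [hsq] <;> nlinarith [hmem.1, hmem.2]
      have hSmem : (r, θ) ∈ S := ⟨hmem, hθ⟩
      rw [hsymm, indicator_of_mem hann, indicator_of_mem hSmem]
      simp [Gf, smul_eq_mul]
    · have hann : pt r θ ∉ ann a b := by
        intro hc
        obtain ⟨h1', h2'⟩ := hc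
        rw [hsq] at h1' h2'
        exact hmem ⟨by nlinarith, by nlinarith⟩
      have hSmem : (r, θ) ∉ S := fun hc => hmem hc.1
      rw [hsymm, indicator_of_notMem hann, indicator_of_notMem hSmem, smul_zero]
  have hGc : ContinuousOn Gf (Icc a b ×ˢ Icc (-π) π) := by
    apply ContinuousOn.mul continuousOn_fst
    apply hPc.comp
    · apply Continuous.continuousOn
      show Continuous fun p : ℝ × ℝ => pt p.1 p.2
      simp only [pt]; fun_prop
    · rintro ⟨r, θ⟩ ⟨hr, _⟩
      exact pt_mem_cann θ ha.le hr.1 hr.2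
  have hGint : IntegrableOn Gf S volume := by
    apply IntegrableOn.mono_set (hGc.integrableOn_compact (isCompact_Icc.prod isCompact_Icc))
    exact Set.prod_mono Ioo_subset_Icc_self Ioo_subset_Icc_self
  have hGint' : Integrable Gf ((volume.restrict (Ioo a b)).prod (volume.restrict (Ioo (-π) π))) := by
    rwa [Measure.prod_restrict, ← Measure.volume_eq_prod]
  have hSsub : S ⊆ polarCoord.target := by
    rw [polarCoord_target]
    exact Set.prod_mono (fun r hr => lt_trans ha hr.1) subset_rfl
  have h4 : (∫ p in polarCoord.target, p.1 • (ann a b).indicator P (polarCoord.symm p))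
      = ∫ p in S, Gf p := by
    rw [setIntegral_congr_fun polarCoord.open_target.measurableSet h2,
      setIntegral_indicator hSm, Set.inter_eq_self_of_subset_right hSsub]
  have h5 : ∫ p in S, Gf p = ∫ θ in Ioo (-π) π, ∫ r in Ioo a b, Gf (r, θ) := by
    rw [hS, Measure.volume_eq_prod, ← Measure.prod_restrict]
    · rw [← integral_integral_swap]
      · exact integral_prod Gf hGint'
      · exact hGint'
  have h6 : ∀ θ : ℝ, (∫ r in Ioo a b, Gf (r, θ)) = ∫ r in a..b, r * P (pt r θ) := by
    intro θ
    rw [intervalIntegral.integral_of_le hab.le, integral_Ioc_eq_integral_Ioo]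
  have hper : Function.Periodic (fun θ => ∫ r in a..b, r * P (pt r θ)) (2 * π) := by
    intro θ
    simp only [pt, Real.cos_add_two_pi, Real.sin_add_two_pi]
  have h8 : ∫ θ in (-π)..π, (∫ r in a..b, r * P (pt r θ))
      = ∫ θ in (0:ℝ)..(2*π), (∫ r in a..b, r * P (pt r θ)) := by
    have h := hper.intervalIntegral_add_eq (-π) 0
    rw [show -π + 2*π = π by ring, zero_add] at h
    exact h
  rw [h1, h4, h5]
  simp only [h6]
  rw [← h8, intervalIntegral.integral_of_le (by linarith [pi_pos] : -π ≤ π),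
    integral_Ioc_eq_integral_Ioo]

open Set in
lemma intervalIntegrable_param (a b c d : ℝ) (hab : a ≤ b) (hcd : c ≤ d) (F : ℝ → ℝ → ℝ)
    (hF : ContinuousOn (fun q : ℝ × ℝ => F q.1 q.2) (Icc c d ×ˢ Icc a b)) :
    IntervalIntegrable (fun θ => ∫ r in a..b, F θ r) volume c d := by
  have hint : IntegrableOn (fun q : ℝ × ℝ => F q.1 q.2) (Icc c d ×ˢ Icc a b) :=
    hF.integrableOn_compact (isCompact_Icc.prod isCompact_Icc)
  have hint' : Integrable (fun q : ℝ × ℝ => F q.1 q.2)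
      ((volume.restrict (Icc c d)).prod (volume.restrict (Icc a b))) := by
    rwa [Measure.prod_restrict, ← Measure.volume_eq_prod]
  have h := hint'.integral_prod_left
  have heq : (fun θ => ∫ r, F θ r ∂(volume.restrict (Icc a b)))
      = fun θ => ∫ r in a..b, F θ r := by
    funext θ
    rw [integral_Icc_eq_integral_Ioc, ← intervalIntegral.integral_of_le hab]
  rw [heq] at h
  rw [intervalIntegrable_iff_integrableOn_Icc_of_le hcd]
  exact h

/- ======================= Main theorem ======================= -/

/-- the ε-trace estimate on the annulus. -/
theorem epsilon_trace_estimate (a b : ℝ) (ha : 0 < a) (hab : a < b) :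
    ∀ ε : ℝ, 0 < ε → ∀ a₁ a₂ : ℝ, ∃ C : ℝ, 0 ≤ C ∧
      ∀ (v : ℝ × ℝ → ℝ × ℝ) (U : Set (ℝ × ℝ)),
        IsOpen U → cann a b ⊆ U → ContDiffOn ℝ 1 v U →
        |a₁ * bInt b (fun x => (tang b v x) ^ 2)
          + a₂ * bInt a (fun x => (tang a v x) ^ 2)|
        ≤ ε * (∫ x in ann a b,
              ((pd1 (cmp1 v) x) ^ 2 + (pd1 (cmp2 v) x) ^ 2
                + (pd2 (cmp1 v) x) ^ 2 + (pd2 (cmp2 v) x) ^ 2))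
          + C * ∫ x in ann a b, ((v x).1 ^ 2 + (v x).2 ^ 2) := by
  intro ε hε a₁ a₂
  have hb : 0 < b := ha.trans hab
  have hba : 0 < b - a := by linarith
  set M : ℝ := |a₁| / b + |a₂| / a with hM
  have hM0 : 0 ≤ M := by rw [hM]; positivity
  set δ : ℝ := ε * a / (4 * (M + 1)) with hδdef
  have hδ : 0 < δ := by
    rw [hδdef]; exact div_pos (by positivity) (by linarith)
  set E : ℝ := b ^ 4 / δ with hEdef
  have hE0 : 0 < E := by rw [hEdef]; exact div_pos (by positivity) hδ
  set K : ℝ := 2 * b ^ 2 * (1 / (b - a)) + 4 * b + 2 * E with hKdef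
  have hK0 : 0 < K := by
    rw [hKdef]
    have h1 : 0 < 2 * b ^ 2 * (1 / (b - a)) := by
      apply mul_pos (by positivity) (one_div_pos.mpr hba)
    linarith
  have hEδ : δ * E = b ^ 4 := by rw [hEdef]; field_simp
  refine ⟨M * K / a, div_nonneg (mul_nonneg hM0 hK0.le) ha.le, ?_⟩
  intro v U hU hsub hv
  -- continuity and differentiability facts
  have hvc : ContinuousOn v U := hv.continuousOn
  have hv1 : ContDiffOn ℝ 1 (cmp1 v) U := hv.fst
  have hv2 : ContDiffOn ℝ 1 (cmp2 v) U := hv.snd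
  have hd1 : DifferentiableOn ℝ (cmp1 v) U := hv1.differentiableOn one_ne_zero
  have hd2 : DifferentiableOn ℝ (cmp2 v) U := hv2.differentiableOn one_ne_zero
  have hfd1 : ContinuousOn (fun x => fderiv ℝ (cmp1 v) x) U :=
    hv1.continuousOn_fderiv_of_isOpen hU le_rfl
  have hfd2 : ContinuousOn (fun x => fderiv ℝ (cmp2 v) x) U :=
    hv2.continuousOn_fderiv_of_isOpen hU le_rfl
  have hp11 : ContinuousOn (pd1 (cmp1 v)) U := hfd1.clm_apply continuousOn_const
  have hp21 : ContinuousOn (pd2 (cmp1 v)) U := hfd1.clm_apply continuousOn_const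
  have hp12 : ContinuousOn (pd1 (cmp2 v)) U := hfd2.clm_apply continuousOn_const
  have hp22 : ContinuousOn (pd2 (cmp2 v)) U := hfd2.clm_apply continuousOn_const
  set g : ℝ × ℝ → ℝ := fun x => (v x).1 * x.2 - (v x).2 * x.1 with hgdef
  set N : ℝ × ℝ → ℝ := fun x => (v x).1 ^ 2 + (v x).2 ^ 2 with hNdef
  set Q : ℝ × ℝ → ℝ := fun x => (pd1 (cmp1 v) x) ^ 2 + (pd1 (cmp2 v) x) ^ 2
      + (pd2 (cmp1 v) x) ^ 2 + (pd2 (cmp2 v) x) ^ 2 with hQdef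
  set P : ℝ × ℝ → ℝ := fun x => K * N x + 4 * δ * Q x with hPdef
  have hP0 : ∀ x, 0 ≤ P x := by
    intro x
    simp only [hPdef]
    apply add_nonneg
    · exact mul_nonneg hK0.le (by simp only [hNdef]; positivity)
    · exact mul_nonneg (by positivity) (by simp only [hQdef]; positivity)
  have hNc : ContinuousOn N (cann a b) := by
    simp only [hNdef]
    exact (((hvc.mono hsub).fst).pow 2).add (((hvc.mono hsub).snd).pow 2)
  have hQc : ContinuousOn Q (cann a b) := by
    simp only [hQdef]
    exact ((((hp11.mono hsub).pow 2).add ((hp12.mono hsub).pow 2)).add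
      ((hp21.mono hsub).pow 2)).add ((hp22.mono hsub).pow 2)
  have hPc : ContinuousOn P (cann a b) := by
    simp only [hPdef]
    exact (continuousOn_const.mul hNc).add (continuousOn_const.mul hQc)
  have hgU : ContinuousOn g U := by
    simp only [hgdef]
    exact (hvc.fst.mul continuous_snd.continuousOn).sub (hvc.snd.mul continuous_fst.continuousOn)
  have hmc : ∀ θ : ℝ, Continuous (fun r => pt r θ) := by
    intro θ; simp only [pt]; fun_prop
  have hmc' : ∀ R : ℝ, Continuous (fun θ => pt R θ) := by
    intro R; simp only [pt]; fun_prop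
  -- the per-ray trace estimate
  have key : ∀ θ : ℝ, g (pt b θ) ^ 2 ≤ (∫ r in a..b, P (pt r θ))
      ∧ g (pt a θ) ^ 2 ≤ (∫ r in a..b, P (pt r θ)) := by
    intro θ
    have hmem : ∀ r ∈ Set.Icc a b, pt r θ ∈ cann a b :=
      fun r hr => pt_mem_cann θ ha.le hr.1 hr.2
    have hmemU : ∀ r ∈ Set.Icc a b, pt r θ ∈ U := fun r hr => hsub (hmem r hr)
    apply ftc_trace a b hab (fun r => g (pt r θ))
      (fun r => fderiv ℝ (cmp1 v) (pt r θ) (Real.cos θ, Real.sin θ) * (pt r θ).2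
        + (v (pt r θ)).1 * Real.sin θ
        - (fderiv ℝ (cmp2 v) (pt r θ) (Real.cos θ, Real.sin θ) * (pt r θ).1
          + (v (pt r θ)).2 * Real.cos θ))
      (fun r => P (pt r θ))
    · -- derivative
      intro r hr
      have hx : pt r θ ∈ U := hmemU r hr
      have hpt : HasDerivAt (fun s => pt s θ) (Real.cos θ, Real.sin θ) r := by
        simp only [pt]
        exact (hasDerivAt_mul_const _).prodMk (hasDerivAt_mul_const _)
      have h1 : HasDerivAt (fun s => (v (pt s θ)).1)
          (fderiv ℝ (cmp1 v) (pt r θ) (Real.cos θ, Real.sin θ)) r :=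
        ((hd1.differentiableAt (hU.mem_nhds hx)).hasFDerivAt).comp_hasDerivAt (l := cmp1 v) r hpt
      have h3 : HasDerivAt (fun s => (v (pt s θ)).2)
          (fderiv ℝ (cmp2 v) (pt r θ) (Real.cos θ, Real.sin θ)) r :=
        ((hd2.differentiableAt (hU.mem_nhds hx)).hasFDerivAt).comp_hasDerivAt (l := cmp2 v) r hpt
      have h2 : HasDerivAt (fun s => (pt s θ).2) (Real.sin θ) r := by
        simp only [pt]
        exact hasDerivAt_mul_const _
      have h4 : HasDerivAt (fun s => (pt s θ).1) (Real.cos θ) r := by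
        simp only [pt]
        exact hasDerivAt_mul_const _
      have := (h1.mul h2).sub (h3.mul h4)
      simp only [hgdef]
      exact this
    · -- continuity of G'
      have hcs1 : ContinuousOn (fun x : ℝ × ℝ =>
          fderiv ℝ (cmp1 v) x (Real.cos θ, Real.sin θ)) U := hfd1.clm_apply continuousOn_const
      have hcs2 : ContinuousOn (fun x : ℝ × ℝ =>
          fderiv ℝ (cmp2 v) x (Real.cos θ, Real.sin θ)) U := hfd2.clm_apply continuousOn_const
      have hFc : ContinuousOn (fun x : ℝ × ℝ =>
          fderiv ℝ (cmp1 v) x (Real.cos θ, Real.sin θ) * x.2 + (v x).1 * Real.sin θ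
          - (fderiv ℝ (cmp2 v) x (Real.cos θ, Real.sin θ) * x.1 + (v x).2 * Real.cos θ)) U :=
        ((hcs1.mul continuous_snd.continuousOn).add (hvc.fst.mul continuousOn_const)).sub
          ((hcs2.mul continuous_fst.continuousOn).add (hvc.snd.mul continuousOn_const))
      exact hFc.comp (hmc θ).continuousOn hmemU
    · -- continuity of p
      exact hPc.comp (hmc θ).continuousOn hmem
    · -- pointwise bound
      intro r hr w u hwle hule
      have hx : pt r θ ∈ cann a b := hmem r hr
      obtain ⟨hx1, hx2⟩ := cann_bound hx hb.le
      have := ptwise_bound v (pt r θ) θ b (b - a) δ E u w hδ hb hx1 hx2 hule hwle hEδ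
      simp only [hgdef, hPdef, hNdef, hQdef, hKdef]
      exact this
  -- interval integrability of the slice integrals
  set J : ℝ → ℝ := fun θ => ∫ r in a..b, P (pt r θ) with hJdef
  have hslicecont : ContinuousOn (fun q : ℝ × ℝ => P (pt q.2 q.1))
      (Set.Icc 0 (2*π) ×ˢ Set.Icc a b) := by
    apply hPc.comp
    · apply Continuous.continuousOn
      show Continuous fun q : ℝ × ℝ => pt q.2 q.1
      simp only [pt]; fun_prop
    · rintro ⟨θ, r⟩ ⟨_, hr⟩
      exact pt_mem_cann θ ha.le hr.1 hr.2
  have hFJ : IntervalIntegrable J volume 0 (2*π) := by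
    apply intervalIntegrable_param a b 0 (2*π) hab.le (by positivity) (fun θ r => P (pt r θ))
    exact hslicecont
  have hFJr : IntervalIntegrable (fun θ => ∫ r in a..b, r * P (pt r θ)) volume 0 (2*π) := by
    apply intervalIntegrable_param a b 0 (2*π) hab.le (by positivity)
      (fun θ r => r * P (pt r θ))
    exact continuous_snd.continuousOn.mul hslicecont
  have hJ0 : ∀ θ, 0 ≤ J θ := fun θ =>
    intervalIntegral.integral_nonneg hab.le (fun r _ => hP0 _)
  have hJnn : 0 ≤ ∫ θ in (0:ℝ)..(2*π), J θ :=
    intervalIntegral.integral_nonneg (by positivity) (fun θ _ => hJ0 θ)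
  -- comparing boundary integrals with (1/R) ∫ J
  have hcompare : ∀ R : ℝ, 0 < R → a ≤ R → R ≤ b →
      (∀ θ : ℝ, g (pt R θ) ^ 2 ≤ J θ) →
      bInt R (fun x => (tang R v x) ^ 2) ≤ (1/R) * ∫ θ in (0:ℝ)..(2*π), J θ := by
    intro R hR haR hRb hkey
    have hbeq : bInt R (fun x => (tang R v x) ^ 2)
        = ∫ θ in (0:ℝ)..(2*π), (g (pt R θ)) ^ 2 / R := by
      rw [bInt]
      apply intervalIntegral.integral_congr
      intro θ _
      show (tang R v (R * Real.cos θ, R * Real.sin θ)) ^ 2 * R = (g (pt R θ)) ^ 2 / R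
      simp only [tang, pt, hgdef]
      rw [div_pow]
      field_simp
    rw [hbeq]
    have hmono : (∫ θ in (0:ℝ)..(2*π), (g (pt R θ)) ^ 2 / R)
        ≤ ∫ θ in (0:ℝ)..(2*π), (1/R) * J θ := by
      apply intervalIntegral.integral_mono_on (by positivity)
      · apply ContinuousOn.intervalIntegrable
        apply ContinuousOn.div_const
        apply ContinuousOn.pow
        exact (hgU.comp (hmc' R).continuousOn
          (fun θ _ => hsub (pt_mem_cann θ ha.le haR hRb)))
      · exact hFJ.const_mul (1/R)
      · intro θ _
        calc (g (pt R θ)) ^ 2 / R ≤ J θ / R := by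
              exact (div_le_div_iff_of_pos_right hR).mpr (hkey θ)
          _ = (1/R) * J θ := by ring
    calc (∫ θ in (0:ℝ)..(2*π), (g (pt R θ)) ^ 2 / R)
        ≤ ∫ θ in (0:ℝ)..(2*π), (1/R) * J θ := hmono
      _ = (1/R) * ∫ θ in (0:ℝ)..(2*π), J θ := intervalIntegral.integral_const_mul _ _
  have houter := hcompare b hb hab.le le_rfl (fun θ => (key θ).1)
  have hinner := hcompare a ha le_rfl hab.le (fun θ => (key θ).2)
  have hXnn : 0 ≤ bInt b (fun x => (tang b v x) ^ 2) := by
    rw [bInt]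
    apply intervalIntegral.integral_nonneg (by positivity)
    intro θ _
    have : 0 ≤ (tang b v (b * Real.cos θ, b * Real.sin θ)) ^ 2 := sq_nonneg _
    nlinarith [hb.le]
  have hYnn : 0 ≤ bInt a (fun x => (tang a v x) ^ 2) := by
    rw [bInt]
    apply intervalIntegral.integral_nonneg (by positivity)
    intro θ _
    have : 0 ≤ (tang a v (a * Real.cos θ, a * Real.sin θ)) ^ 2 := sq_nonneg _
    nlinarith [ha.le]
  have habs : |a₁ * bInt b (fun x => (tang b v x) ^ 2) + a₂ * bInt a (fun x => (tang a v x) ^ 2)|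
      ≤ M * ∫ θ in (0:ℝ)..(2*π), J θ := by
    calc |a₁ * bInt b (fun x => (tang b v x) ^ 2) + a₂ * bInt a (fun x => (tang a v x) ^ 2)|
        ≤ |a₁ * bInt b (fun x => (tang b v x) ^ 2)|
          + |a₂ * bInt a (fun x => (tang a v x) ^ 2)| := abs_add_le _ _
      _ = |a₁| * bInt b (fun x => (tang b v x) ^ 2)
          + |a₂| * bInt a (fun x => (tang a v x) ^ 2) := by
          rw [abs_mul, abs_mul, abs_of_nonneg hXnn, abs_of_nonneg hYnn]
      _ ≤ |a₁| * ((1/b) * ∫ θ in (0:ℝ)..(2*π), J θ)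
          + |a₂| * ((1/a) * ∫ θ in (0:ℝ)..(2*π), J θ) :=
          add_le_add (mul_le_mul_of_nonneg_left houter (abs_nonneg _))
            (mul_le_mul_of_nonneg_left hinner (abs_nonneg _))
      _ = M * ∫ θ in (0:ℝ)..(2*π), J θ := by rw [hM]; ring
  have hcomp : ∀ θ : ℝ, ContinuousOn (fun r => P (pt r θ)) (Set.Icc a b) :=
    fun θ => hPc.comp (hmc θ).continuousOn (fun r hr => pt_mem_cann θ ha.le hr.1 hr.2)
  have hJarea : (∫ θ in (0:ℝ)..(2*π), J θ) ≤ (1/a) * ∫ x in ann a b, P x := by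
    have hpe := polar_eq a b ha hab P hPc
    have hmono2 : (∫ θ in (0:ℝ)..(2*π), J θ)
        ≤ ∫ θ in (0:ℝ)..(2*π), (1/a) * (∫ r in a..b, r * P (pt r θ)) := by
      apply intervalIntegral.integral_mono_on (by positivity) hFJ (hFJr.const_mul (1/a))
      intro θ _
      have hint1 : IntervalIntegrable (fun r => a * P (pt r θ)) volume a b := by
        apply ContinuousOn.intervalIntegrable
        rw [Set.uIcc_of_le hab.le]
        exact continuousOn_const.mul (hcomp θ)
      have hint2 : IntervalIntegrable (fun r => r * P (pt r θ)) volume a b := by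
        apply ContinuousOn.intervalIntegrable
        rw [Set.uIcc_of_le hab.le]
        exact continuousOn_id.mul (hcomp θ)
      have h1 : a * J θ ≤ ∫ r in a..b, r * P (pt r θ) := by
        rw [hJdef, ← intervalIntegral.integral_const_mul]
        apply intervalIntegral.integral_mono_on hab.le hint1 hint2
        intro r hr
        exact mul_le_mul_of_nonneg_right hr.1 (hP0 _)
      calc J θ = (1/a) * (a * J θ) := by field_simp
        _ ≤ (1/a) * (∫ r in a..b, r * P (pt r θ)) :=
            mul_le_mul_of_nonneg_left h1 (by positivity)
    rw [intervalIntegral.integral_const_mul] at hmono2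
    rw [← hpe] at hmono2
    exact hmono2
  have hsubann : ann a b ⊆ cann a b := fun x hx => ⟨hx.1.le, hx.2.le⟩
  have hNint : IntegrableOn N (ann a b) volume :=
    (hNc.integrableOn_compact (isCompact_cann a b hb.le)).mono_set hsubann
  have hQint : IntegrableOn Q (ann a b) volume :=
    (hQc.integrableOn_compact (isCompact_cann a b hb.le)).mono_set hsubann
  have hsplit : (∫ x in ann a b, P x)
      = K * (∫ x in ann a b, N x) + 4 * δ * ∫ x in ann a b, Q x := by
    have h0 : (∫ x in ann a b, P x) = ∫ x in ann a b, (K * N x + 4 * δ * Q x) := by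
      simp only [hPdef]
    rw [h0, integral_add (hNint.const_mul K) (hQint.const_mul (4 * δ)),
      integral_const_mul, integral_const_mul]
  have hQnn : 0 ≤ ∫ x in ann a b, Q x :=
    setIntegral_nonneg (isOpen_ann a b).measurableSet
      (fun x _ => by simp only [hQdef]; positivity)
  have hM1 : (0:ℝ) < M + 1 := by linarith
  have hcoeff : M * (1/a) * (4 * δ) ≤ ε := by
    rw [hδdef]
    rw [show M * (1/a) * (4 * (ε * a / (4 * (M+1)))) = ε * (M / (M+1)) by
      field_simp]
    calc ε * (M / (M+1)) ≤ ε * 1 :=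
          mul_le_mul_of_nonneg_left ((div_le_one hM1).mpr (by linarith)) hε.le
      _ = ε := mul_one ε
  have final : |a₁ * bInt b (fun x => (tang b v x) ^ 2)
      + a₂ * bInt a (fun x => (tang a v x) ^ 2)|
      ≤ ε * (∫ x in ann a b, Q x) + (M * K / a) * ∫ x in ann a b, N x := by
    calc |a₁ * bInt b (fun x => (tang b v x) ^ 2) + a₂ * bInt a (fun x => (tang a v x) ^ 2)|
        ≤ M * ∫ θ in (0:ℝ)..(2*π), J θ := habs
      _ ≤ M * ((1/a) * ∫ x in ann a b, P x) := mul_le_mul_of_nonneg_left hJarea hM0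
      _ = (M * (1/a) * (4 * δ)) * (∫ x in ann a b, Q x)
          + (M * K / a) * ∫ x in ann a b, N x := by
          rw [hsplit]; ring
      _ ≤ ε * (∫ x in ann a b, Q x) + (M * K / a) * ∫ x in ann a b, N x :=
          add_le_add (mul_le_mul_of_nonneg_right hcoeff hQnn) le_rfl
  simpa only [hQdef, hNdef] using final
end
end

section
/- Let a > 0, μ > 0 and α > 0, and let v : ℝ² → ℝ² be continuously differentiable on a neighborhood of the circle {x ∈ ℝ² : |x| = a}, with v(x)·x = 0 for all x with |x| = a, and satisfying the Navier-slip condition on |x| = a. Then for every x with |x| = a, (∂₁v₂ − ∂₂v₁)(x) = (α/μ − 2/a) · (v(x)·τ(x)), where τ(x) = (x₂, −x₁)/a. -/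
open Real MeasureTheory

noncomputable section

/-- vorticity production at the inner boundary: for a tangent field `v`
satisfying the Navier-slip condition on `|x| = a`, the vorticity on that circle equals
`(α/μ − 2/a) v_τ`. -/
theorem vorticity_boundary_value (a μ α : ℝ) (ha : 0 < a) (hμ : 0 < μ) (hα : 0 < α)
    (v : ℝ × ℝ → ℝ × ℝ)
    (U : Set (ℝ × ℝ)) (hU : IsOpen U) (hUc : circ a ⊆ U)
    (hv : ContDiffOn ℝ 1 v U)
    (hvt : ∀ x ∈ circ a, (v x).1 * x.1 + (v x).2 * x.2 = 0)
    (hns : navierSlip μ α a v) :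
    ∀ x ∈ circ a,
      pd1 (cmp2 v) x - pd2 (cmp1 v) x
        = (α / μ - 2 / a) * ((v x).1 * (x.2 / a) + (v x).2 * (-(x.1 / a))) := by
  intro x hx
  have hx' : x.1 ^ 2 + x.2 ^ 2 = a ^ 2 := hx
  have hxU : x ∈ U := hUc hx
  have hdv : DifferentiableAt ℝ v x :=
    (hv.contDiffAt (hU.mem_nhds hxU)).differentiableAt one_ne_zero
  set A := fderiv ℝ v x with hAdef
  have hA : HasFDerivAt v A x := hdv.hasFDerivAt
  have hA1 : HasFDerivAt (cmp1 v) ((ContinuousLinearMap.fst ℝ ℝ ℝ).comp A) x := hA.fst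
  have hA2 : HasFDerivAt (cmp2 v) ((ContinuousLinearMap.snd ℝ ℝ ℝ).comp A) x := hA.snd
  have h11 : pd1 (cmp1 v) x = (A (1, 0)).1 := by
    simp only [pd1, hA1.fderiv]; rfl
  have h21 : pd2 (cmp1 v) x = (A (0, 1)).1 := by
    simp only [pd2, hA1.fderiv]; rfl
  have h12 : pd1 (cmp2 v) x = (A (1, 0)).2 := by
    simp only [pd1, hA2.fderiv]; rfl
  have h22 : pd2 (cmp2 v) x = (A (0, 1)).2 := by
    simp only [pd2, hA2.fderiv]; rfl
  -- tangential derivative of the constraint v·x = 0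
  set γ : ℝ → ℝ × ℝ := fun t =>
    (x.1 * Real.cos t - x.2 * Real.sin t, x.1 * Real.sin t + x.2 * Real.cos t) with hγdef
  have hγ0 : γ 0 = x := by simp [hγdef]
  have hγ : HasDerivAt γ (-x.2, x.1) 0 := by
    have hc := (Real.hasDerivAt_cos 0).const_mul x.1
    have hs := (Real.hasDerivAt_sin 0).const_mul x.2
    have hc2 := (Real.hasDerivAt_cos 0).const_mul x.2
    have hs2 := (Real.hasDerivAt_sin 0).const_mul x.1
    have := (hc.sub hs).prodMk (hs2.add hc2)
    simpa using this
  set Lg : (ℝ × ℝ) →L[ℝ] ℝ :=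
    (((v x).1 • ContinuousLinearMap.fst ℝ ℝ ℝ
        + x.1 • ((ContinuousLinearMap.fst ℝ ℝ ℝ).comp A))
      + ((v x).2 • ContinuousLinearMap.snd ℝ ℝ ℝ
        + x.2 • ((ContinuousLinearMap.snd ℝ ℝ ℝ).comp A))) with hLgdef
  have hg : HasFDerivAt (fun y : ℝ × ℝ => (v y).1 * y.1 + (v y).2 * y.2) Lg x := by
    exact (hA1.mul (hasFDerivAt_fst (𝕜 := ℝ))).add (hA2.mul (hasFDerivAt_snd (𝕜 := ℝ)))
  have hcomp : HasDerivAt (fun t => (v (γ t)).1 * (γ t).1 + (v (γ t)).2 * (γ t).2)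
      (Lg (-x.2, x.1)) 0 := by
    have := (hγ0 ▸ hg).comp_hasDerivAt 0 hγ
    exact this
  have hzero : (fun t => (v (γ t)).1 * (γ t).1 + (v (γ t)).2 * (γ t).2)
      = fun _ => (0 : ℝ) := by
    funext t
    apply hvt
    show (γ t).1 ^ 2 + (γ t).2 ^ 2 = a ^ 2
    have hsc := Real.sin_sq_add_cos_sq t
    simp only [hγdef]
    nlinarith [hsc, hx']
  have hT0 : Lg (-x.2, x.1) = 0 := by
    have h := hcomp
    rw [hzero] at h
    exact h.unique (hasDerivAt_const 0 0)
  have hvec : ((-x.2 : ℝ), (x.1 : ℝ)) = (-x.2) • ((1 : ℝ), (0 : ℝ)) + x.1 • ((0 : ℝ), (1 : ℝ)) := by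
    simp [Prod.ext_iff]
  have hAv : A (-x.2, x.1) = (-x.2) • A (1, 0) + x.1 • A (0, 1) := by
    have h : A ((-x.2) • ((1 : ℝ), (0 : ℝ)) + x.1 • ((0 : ℝ), (1 : ℝ)))
        = (-x.2) • A (1, 0) + x.1 • A (0, 1) := by
      rw [map_add, A.map_smul, A.map_smul]
    rw [← hvec] at h
    exact h
  have hT : (v x).1 * (-x.2) + x.1 * ((-x.2) * (A (1, 0)).1 + x.1 * (A (0, 1)).1)
      + ((v x).2 * x.1 + x.2 * ((-x.2) * (A (1, 0)).2 + x.1 * (A (0, 1)).2)) = 0 := by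
    have h := hT0
    simp [hLgdef, hAv, Prod.smul_fst, Prod.smul_snd, smul_eq_mul] at h
    linarith [h]
  have hNS := hns x hx'
  rw [h11, h12, h21, h22] at hNS
  rw [h12, h21]
  have ha' : a ≠ 0 := ne_of_gt ha
  have hμ' : μ ≠ 0 := ne_of_gt hμ
  field_simp at hNS
  have h3 : μ * (-(x.2 * x.1) * ((A (1, 0)).1 + (A (1, 0)).1)
        + -(x.2 * x.2) * ((A (1, 0)).2 + (A (0, 1)).1)
        + x.1 * x.1 * ((A (0, 1)).1 + (A (1, 0)).2)
        + x.1 * x.2 * ((A (0, 1)).2 + (A (0, 1)).2))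
      = α * ((v x).1 * x.2 - (v x).2 * x.1) * a := by
    have ha7 : (a : ℝ) ^ 7 ≠ 0 := pow_ne_zero 7 ha'
    apply mul_left_cancel₀ ha7
    linear_combination a ^ 7 * hNS
  have key : ((A (1, 0)).2 - (A (0, 1)).1) * (μ * a * a)
      = (α * a - 2 * μ) * ((v x).1 * x.2 - (v x).2 * x.1) := by
    linear_combination h3 - 2 * μ * hT - μ * ((A (1, 0)).2 - (A (0, 1)).1) * hx'
  field_simp
  linarith [key]
end
end
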